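/- arXiv:1601.04011 — 5 statements merged into one kernel-verified Lean document; each statement's English description precedes it below -/
import Mathlib

section
/- For every sample S whose empirical covariance matrix Ĉ = (1/n)·Σ_{i=1}^n x_i x_iᵀ is invertible, and for any choice of the minimizers ŵ and ŵ_1,…,ŵ_n, the average stability satisfies Δ(S,W) ≤ (2ρ²/(α·n))·κ(Ĉ), where κ(Ĉ) = tr(Ĉ)/λ_min(Ĉ) is the ratio of the trace of Ĉ to its smallest eigenvalue. -/
open Matrix

open Set Filter Topology Pointwise


lemma gap_lemma (G G' G'' : ℝ → ℝ) (m : ℝ)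
    (hG : ∀ t, HasDerivAt G (G' t) t)
    (hG' : ∀ t, HasDerivAt G' (G'' t) t)
    (hmin : ∀ t ∈ Set.Icc (0:ℝ) 1, G 0 ≤ G t)
    (hsc : ∀ t ∈ Set.Icc (0:ℝ) 1, m ≤ G'' t) :
    G 0 + m / 2 ≤ G 1 := by
  -- G' 0 ≥ 0
  have hG'0 : 0 ≤ G' 0 := by
    have htend : Tendsto (slope G 0) (𝓝[>] 0) (𝓝 (G' 0)) :=
      (hasDerivAt_iff_tendsto_slope.1 (hG 0)).mono_left
        (nhdsWithin_mono 0 (fun t ht => ne_of_gt ht))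
    refine ge_of_tendsto htend ?_
    filter_upwards [Ioc_mem_nhdsGT_of_mem (by constructor <;> norm_num : (0:ℝ) ∈ Ico (0:ℝ) 1)]
      with t ht
    have h1 : G 0 ≤ G t := hmin t ⟨le_of_lt ht.1, ht.2⟩
    have : slope G 0 t = (G t - G 0) / (t - 0) := slope_def_field G 0 t
    rw [this]
    exact div_nonneg (by linarith) (by linarith [ht.1])
  -- H := G' - m t is monotone on [0,1]
  set H : ℝ → ℝ := fun t => G' t - m * t with hHdef
  have hH : ∀ t, HasDerivAt H (G'' t - m) t := by
    intro t
    have h := (hG' t).sub ((hasDerivAt_id t).const_mul m)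
    rw [mul_one] at h
    exact h
  have hHmono : MonotoneOn H (Icc 0 1) := by
    have hd : Differentiable ℝ H := fun t => (hH t).differentiableAt
    apply monotoneOn_of_deriv_nonneg (convex_Icc 0 1)
    · exact hd.continuous.continuousOn
    · exact hd.differentiableOn
    · intro t ht
      rw [interior_Icc] at ht
      rw [(hH t).deriv]
      have := hsc t ⟨le_of_lt ht.1, le_of_lt ht.2⟩
      linarith
  have hHpos : ∀ t ∈ Icc (0:ℝ) 1, m * t ≤ G' t := by
    intro t ht
    have := hHmono (left_mem_Icc.2 zero_le_one) ht ht.1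
    simp only [hHdef, mul_zero, sub_zero] at this
    linarith
  -- K := G - m t²/2 is monotone on [0,1]
  set K : ℝ → ℝ := fun t => G t - m * (t ^ 2 / 2) with hKdef
  have hK : ∀ t, HasDerivAt K (G' t - m * t) t := by
    intro t
    have h2 : HasDerivAt (fun t : ℝ => m * (t ^ 2 / 2)) (m * t) t := by
      have := ((hasDerivAt_pow 2 t).div_const 2).const_mul m
      refine this.congr_deriv ?_
      rw [show (2:ℕ) - 1 = 1 from rfl]; push_cast; ring
    have h := (hG t).sub h2
    exact h
  have hKmono : MonotoneOn K (Icc 0 1) := by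
    have hd : Differentiable ℝ K := fun t => (hK t).differentiableAt
    apply monotoneOn_of_deriv_nonneg (convex_Icc 0 1)
    · exact hd.continuous.continuousOn
    · exact hd.differentiableOn
    · intro t ht
      rw [interior_Icc] at ht
      rw [(hK t).deriv]
      have := hHpos t ⟨le_of_lt ht.1, le_of_lt ht.2⟩
      linarith
  have := hKmono (left_mem_Icc.2 zero_le_one) (right_mem_Icc.2 zero_le_one) zero_le_one
  simp only [hKdef] at this
  norm_num at this
  linarith


lemma quad_lower {d : ℕ} (C : Matrix (Fin d) (Fin d) ℝ) (hCh : C.IsHermitian) (v : Fin d → ℝ) :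
    sInf (spectrum ℝ C) * (v ⬝ᵥ v) ≤ v ⬝ᵥ (C *ᵥ v) := by
  set lam := sInf (spectrum ℝ C) with hlam
  set M := C - (algebraMap ℝ (Matrix (Fin d) (Fin d) ℝ)) lam with hM
  have hMh : M.IsHermitian := by
    rw [hM, Algebra.algebraMap_eq_smul_one]
    unfold Matrix.IsHermitian
    simp only [Matrix.conjTranspose_sub, Matrix.conjTranspose_smul, star_trivial,
      Matrix.conjTranspose_one, hCh.eq]
  have hMspec : spectrum ℝ M = spectrum ℝ C - {lam} := (spectrum.sub_singleton_eq C lam).symm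
  have hMps : M.PosSemidef := by
    apply (Matrix.IsHermitian.posSemidef_iff_eigenvalues_nonneg hMh).mpr
    intro i
    have hmem := Matrix.IsHermitian.eigenvalues_mem_spectrum_real hMh i
    rw [hMspec] at hmem
    obtain ⟨a, ha, b, hb, hab⟩ := hmem
    rw [Set.mem_singleton_iff] at hb
    subst hb
    have h1 : lam ≤ a := csInf_le (Matrix.finite_real_spectrum (𝕜 := ℝ)).bddBelow ha
    have h2 : a - lam = hMh.eigenvalues i := hab
    exact (by linarith : (0:ℝ) ≤ hMh.eigenvalues i)
  have h2 := hMps.dotProduct_mulVec_nonneg v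
  have hMv : M *ᵥ v = C *ᵥ v - lam • v := by
    rw [hM, Algebra.algebraMap_eq_smul_one, Matrix.sub_mulVec, Matrix.smul_mulVec,
      Matrix.one_mulVec]
  rw [hMv] at h2
  simp only [star_trivial, dotProduct_sub, dotProduct_smul, smul_eq_mul] at h2
  linarith


lemma sum_mulVec' {d n : ℕ} (A : Fin n → Matrix (Fin d) (Fin d) ℝ) (v : Fin d → ℝ) :
    (∑ i, A i) *ᵥ v = ∑ i, (A i *ᵥ v) := by
  ext k
  simp [Matrix.mulVec, dotProduct, Matrix.sum_apply, Finset.sum_mul]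
  rw [Finset.sum_comm]

lemma vecMulVec_mulVec' {d : ℕ} (a v : Fin d → ℝ) :
    vecMulVec a a *ᵥ v = (a ⬝ᵥ v) • a := by
  ext k
  simp [Matrix.mulVec, Matrix.vecMulVec_apply, dotProduct, Finset.mul_sum, Finset.sum_mul]
  congr 1; ext l; ring

lemma quad_eq {d n : ℕ} (x : Fin n → Fin d → ℝ) (v : Fin d → ℝ) :
    v ⬝ᵥ ((((1:ℝ)/n) • ∑ i, vecMulVec (x i) (x i)) *ᵥ v)
      = (1/n : ℝ) * ∑ i, (x i ⬝ᵥ v)^2 := by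
  rw [smul_mulVec, sum_mulVec']
  simp only [vecMulVec_mulVec']
  rw [dotProduct_smul]
  simp only [smul_eq_mul]
  congr 1
  simp only [dotProduct, Finset.sum_apply, Pi.smul_apply, smul_eq_mul, Finset.mul_sum]
  rw [Finset.sum_comm]
  refine Finset.sum_congr rfl fun i _ => ?_
  have h : ∀ k ∈ Finset.univ, v k * ((∑ l, x i l * v l) * x i k)
      = (∑ l, x i l * v l) * (x i k * v k) := fun k _ => by ring
  rw [Finset.sum_congr rfl h, ← Finset.mul_sum, pow_two]

lemma trace_eq {d n : ℕ} (x : Fin n → Fin d → ℝ) :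
    ((((1:ℝ)/n) • ∑ i, vecMulVec (x i) (x i)) : Matrix (Fin d) (Fin d) ℝ).trace
      = (1/n : ℝ) * ∑ i, (x i ⬝ᵥ x i) := by
  rw [trace_smul, trace_sum, smul_eq_mul]
  have h : ∀ i, (vecMulVec (x i) (x i)).trace = x i ⬝ᵥ x i := fun i => by
    simp [Matrix.trace, Matrix.diag, Matrix.vecMulVec_apply, dotProduct]
  simp [h]

lemma cov_posSemidef {d n : ℕ} (x : Fin n → Fin d → ℝ) :
    ((((1:ℝ)/n) • ∑ i, vecMulVec (x i) (x i)) : Matrix (Fin d) (Fin d) ℝ).PosSemidef := by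
  refine Matrix.PosSemidef.of_dotProduct_mulVec_nonneg ?_ ?_
  · unfold Matrix.IsHermitian
    ext k l
    simp [Matrix.conjTranspose_apply, Matrix.smul_apply, Matrix.sum_apply,
      Matrix.vecMulVec_apply, mul_comm]
  · intro v
    rw [star_trivial, quad_eq]
    have : (0:ℝ) ≤ ∑ i, (x i ⬝ᵥ v)^2 := Finset.sum_nonneg fun i _ => sq_nonneg _
    positivity

lemma lam_pos {d : ℕ} (hd : 0 < d) (C : Matrix (Fin d) (Fin d) ℝ) (hps : C.PosSemidef)
    (hCinv : IsUnit C) : 0 < sInf (spectrum ℝ C) := by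
  have : Nonempty (Fin d) := ⟨⟨0, hd⟩⟩
  have hrange := Matrix.IsHermitian.spectrum_real_eq_range_eigenvalues hps.1
  have hne : (spectrum ℝ C).Nonempty := by rw [hrange]; exact Set.range_nonempty _
  have hmem : sInf (spectrum ℝ C) ∈ spectrum ℝ C :=
    hne.csInf_mem (Matrix.finite_real_spectrum (𝕜 := ℝ))
  have h0 : 0 ≤ sInf (spectrum ℝ C) := by
    have h2 : sInf (spectrum ℝ C) ∈ Set.range hps.1.eigenvalues := hrange ▸ hmem
    obtain ⟨i, hi⟩ := h2
    exact hi ▸ hps.eigenvalues_nonneg i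
  rcases h0.lt_or_eq with h | h
  · exact h
  · exfalso
    exact (spectrum.zero_mem_iff ℝ).mp (h ▸ hmem) hCinv

/-- In the GLM setting, for every sample `S = ((x_i, y_i))_{i=1}^n` whose
empirical covariance matrix `Ĉ = (1/n)·∑ x_i x_iᵀ` is invertible, and any choice of the ERM
`ŵ` and leave-one-out minimizers `ŵ_1, …, ŵ_n` over `W`, the average stability satisfies
`Δ(S,W) = (1/n)·∑_i (ℓ̂_i(ŵ_i) − ℓ̂_i(ŵ)) ≤ (2ρ²/(α·n))·κ(Ĉ)`, where
`κ(Ĉ) = tr(Ĉ)/λ_min(Ĉ)` and `λ_min(Ĉ) = sInf (spectrum ℝ Ĉ)` is the smallest eigenvalue. -/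
theorem average_stability_le_condition_number
    (d n : ℕ) (ρ α : ℝ) (hρ : 0 < ρ) (hα : 0 < α)
    (X W : Set (Fin d → ℝ))
    (hXcomp : IsCompact X) (hXconv : Convex ℝ X)
    (hWcomp : IsCompact W) (hWconv : Convex ℝ W)
    {Y : Type*} (φ : Y → ℝ → ℝ)
    (hφdiff : ∀ y, ∀ z : ℝ, DifferentiableAt ℝ (φ y) z)
    (hφdiff2 : ∀ y, ∀ z : ℝ, DifferentiableAt ℝ (deriv (φ y)) z)
    (hA1 : ∀ y, ∀ w ∈ W, ∀ x ∈ X, |deriv (φ y) (w ⬝ᵥ x)| ≤ ρ)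
    (hA2 : ∀ y, ∀ w ∈ W, ∀ x ∈ X, α ≤ deriv (deriv (φ y)) (w ⬝ᵥ x))
    -- the sample
    (x : Fin n → Fin d → ℝ) (hx : ∀ i, x i ∈ X) (y : Fin n → Y)
    -- the empirical covariance matrix, assumed invertible
    (C : Matrix (Fin d) (Fin d) ℝ)
    (hC : C = (1 / n : ℝ) • ∑ i : Fin n, vecMulVec (x i) (x i))
    (hCinv : IsUnit C)
    -- the empirical risk minimizer
    (what : Fin d → ℝ) (hwhatW : what ∈ W)
    (hwhat : IsMinOn (fun w => (1 / n : ℝ) * ∑ i : Fin n, φ (y i) (w ⬝ᵥ x i)) W what)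
    -- the leave-one-out minimizers
    (whati : Fin n → Fin d → ℝ) (hwhatiW : ∀ i, whati i ∈ W)
    (hwhati : ∀ i, IsMinOn
      (fun w => ∑ j ∈ Finset.univ.erase i, φ (y j) (w ⬝ᵥ x j)) W (whati i)) :
    (1 / n : ℝ) * ∑ i : Fin n, (φ (y i) (whati i ⬝ᵥ x i) - φ (y i) (what ⬝ᵥ x i))
      ≤ (2 * ρ ^ 2 / (α * n)) * (C.trace / sInf (spectrum ℝ C)) := by
  -- dispatch the degenerate case d = 0
  rcases Nat.eq_zero_or_pos d with hd | hd
  · subst hd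
    have hsub : ∀ i, whati i ⬝ᵥ x i = what ⬝ᵥ x i := fun i => by
      congr 1
      exact Subsingleton.elim _ _
    have htr : C.trace = 0 := by simp [Matrix.trace]
    simp [hsub, htr]
  -- d > 0 forces n > 0
  have hdne : Nonempty (Fin d) := ⟨⟨0, hd⟩⟩
  have hn : 0 < n := by
    rcases Nat.eq_zero_or_pos n with h0 | h
    · exfalso
      subst h0
      have hC0 : C = 0 := by simp [hC]
      rw [hC0, Matrix.isUnit_iff_isUnit_det, Matrix.det_zero] at hCinv
      exact hCinv.ne_zero rfl
    · exact h
  have hnR : (0:ℝ) < n := by exact_mod_cast hn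
  -- spectral setup
  have hps : C.PosSemidef := hC ▸ cov_posSemidef x
  set lam := sInf (spectrum ℝ C) with hlamdef
  have hlam : 0 < lam := lam_pos hd C hps hCinv
  -- quadratic lower bound
  have hquad : ∀ v : Fin d → ℝ, (n:ℝ) * lam * (v ⬝ᵥ v) ≤ ∑ j, (x j ⬝ᵥ v)^2 := by
    intro v
    have h1 := quad_lower C hps.1 v
    rw [hC, quad_eq, ← hC, ← hlamdef] at h1
    have h2 := mul_le_mul_of_nonneg_left h1 (le_of_lt hnR)
    calc (n:ℝ) * lam * (v ⬝ᵥ v) = (n:ℝ) * (lam * (v ⬝ᵥ v)) := by ring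
    _ ≤ (n:ℝ) * (1/n * ∑ j, (x j ⬝ᵥ v)^2) := h2
    _ = ∑ j, (x j ⬝ᵥ v)^2 := by field_simp
  -- the key per-index bound
  have key : ∀ i, φ (y i) (whati i ⬝ᵥ x i) - φ (y i) (what ⬝ᵥ x i)
      ≤ 2 * ρ^2 * (x i ⬝ᵥ x i) / (α * n * lam) := by
    intro i
    set v : Fin d → ℝ := whati i - what with hv
    set a : Fin n → ℝ := fun j => what ⬝ᵥ x j with ha
    set c : Fin n → ℝ := fun j => v ⬝ᵥ x j with hcdef
    have hwt : ∀ t ∈ Icc (0:ℝ) 1, what + t • v ∈ W := by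
      intro t ht
      have heq : what + t • v = (1 - t) • what + t • whati i := by
        funext k
        simp only [hv, Pi.add_apply, Pi.smul_apply, Pi.sub_apply, smul_eq_mul]
        ring
      rw [heq]
      exact hWconv hwhatW (hwhatiW i) (by linarith [ht.2]) ht.1 (by ring)
    have hdot : ∀ (t : ℝ) (j : Fin n), (what + t • v) ⬝ᵥ x j = a j + t * c j := by
      intro t j
      simp [ha, hcdef, add_dotProduct, smul_dotProduct, smul_eq_mul]
    have heq1 : ∀ j, a j + 1 * c j = whati i ⬝ᵥ x j := by
      intro j
      have := (hdot 1 j).symm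
      rw [this, one_smul]
      congr 1
      funext k
      simp [hv]
    -- calculus data
    have haff : ∀ (j : Fin n) (t : ℝ), HasDerivAt (fun s : ℝ => a j + s * c j) (c j) t := by
      intro j t
      simpa using ((hasDerivAt_id t).mul_const (c j)).const_add (a j)
    have hGj : ∀ (j : Fin n) (t : ℝ),
        HasDerivAt (fun s => φ (y j) (a j + s * c j))
          (deriv (φ (y j)) (a j + t * c j) * c j) t := fun j t =>
      (hφdiff (y j) _).hasDerivAt.comp t (haff j t)
    have hGj' : ∀ (j : Fin n) (t : ℝ),
        HasDerivAt (fun s => deriv (φ (y j)) (a j + s * c j) * c j)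
          (deriv (deriv (φ (y j))) (a j + t * c j) * c j * c j) t := fun j t =>
      ((hφdiff2 (y j) _).hasDerivAt.comp t (haff j t)).mul_const (c j)
    set G : ℝ → ℝ := fun t => ∑ j, φ (y j) (a j + t * c j) with hGdef
    set G' : ℝ → ℝ := fun t => ∑ j, deriv (φ (y j)) (a j + t * c j) * c j with hG'def
    set G'' : ℝ → ℝ := fun t => ∑ j, deriv (deriv (φ (y j))) (a j + t * c j) * c j * c j
      with hG''def
    have hG : ∀ t, HasDerivAt G (G' t) t := fun t => HasDerivAt.fun_sum fun j _ => hGj j t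
    have hG' : ∀ t, HasDerivAt G' (G'' t) t := fun t => HasDerivAt.fun_sum fun j _ => hGj' j t
    have e0 : G 0 = ∑ j, φ (y j) (what ⬝ᵥ x j) := by
      simp only [hGdef, zero_mul, add_zero]
      rfl
    have e1 : G 1 = ∑ j, φ (y j) (whati i ⬝ᵥ x j) := by
      simp only [hGdef]
      exact Finset.sum_congr rfl fun j _ => by rw [heq1 j]
    -- minimality along the path
    have hmin : ∀ t ∈ Icc (0:ℝ) 1, G 0 ≤ G t := by
      intro t ht
      have h1 : (1/n : ℝ) * ∑ j, φ (y j) (what ⬝ᵥ x j)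
          ≤ (1/n : ℝ) * ∑ j, φ (y j) ((what + t • v) ⬝ᵥ x j) :=
        isMinOn_iff.mp hwhat _ (hwt t ht)
      have h3 := (mul_le_mul_iff_right₀ (show (0:ℝ) < 1/n by positivity)).mp h1
      rw [e0]
      have et : G t = ∑ j, φ (y j) ((what + t • v) ⬝ᵥ x j) := by
        simp only [hGdef]
        exact Finset.sum_congr rfl fun j _ => by rw [hdot t j]
      rw [et]
      exact h3
    -- strong convexity modulus
    set m : ℝ := α * ∑ j, (c j)^2 with hmdef
    have hsc : ∀ t ∈ Icc (0:ℝ) 1, m ≤ G'' t := by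
      intro t ht
      rw [hmdef, Finset.mul_sum]
      refine Finset.sum_le_sum fun j _ => ?_
      have h2 := hA2 (y j) _ (hwt t ht) (x j) (hx j)
      rw [hdot t j] at h2
      nlinarith [sq_nonneg (c j)]
    have hgap := gap_lemma G G' G'' m hG hG' hmin hsc
    -- G 1 - G 0 is at most the i-th term
    have hsplit : G 1 - G 0 ≤ φ (y i) (whati i ⬝ᵥ x i) - φ (y i) (what ⬝ᵥ x i) := by
      rw [e1, e0]
      have hs1 : ∑ j, φ (y j) (whati i ⬝ᵥ x j)
          = φ (y i) (whati i ⬝ᵥ x i) + ∑ j ∈ Finset.univ.erase i, φ (y j) (whati i ⬝ᵥ x j) :=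
        (Finset.add_sum_erase _ _ (Finset.mem_univ i)).symm
      have hs0 : ∑ j, φ (y j) (what ⬝ᵥ x j)
          = φ (y i) (what ⬝ᵥ x i) + ∑ j ∈ Finset.univ.erase i, φ (y j) (what ⬝ᵥ x j) :=
        (Finset.add_sum_erase _ _ (Finset.mem_univ i)).symm
      have her : ∑ j ∈ Finset.univ.erase i, φ (y j) (whati i ⬝ᵥ x j)
          ≤ ∑ j ∈ Finset.univ.erase i, φ (y j) (what ⬝ᵥ x j) :=
        isMinOn_iff.mp (hwhati i) _ hwhatW
      linarith
    -- MVT bound on the i-th term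
    have hmvt : φ (y i) (whati i ⬝ᵥ x i) - φ (y i) (what ⬝ᵥ x i) ≤ ρ * |c i| := by
      have hbd : ∀ t ∈ Ico (0:ℝ) 1, ‖deriv (φ (y i)) (a i + t * c i) * c i‖ ≤ ρ * |c i| := by
        intro t ht
        rw [Real.norm_eq_abs, abs_mul]
        have h1 := hA1 (y i) _ (hwt t ⟨ht.1, le_of_lt ht.2⟩) (x i) (hx i)
        rw [hdot t i] at h1
        exact mul_le_mul_of_nonneg_right h1 (abs_nonneg _)
      have hnorm := norm_image_sub_le_of_norm_deriv_le_segment'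
        (fun t _ => (hGj i t).hasDerivWithinAt) hbd 1 (right_mem_Icc.2 zero_le_one)
      rw [heq1 i] at hnorm
      simp only [zero_mul, add_zero, sub_zero, mul_one, Real.norm_eq_abs] at hnorm
      calc φ (y i) (whati i ⬝ᵥ x i) - φ (y i) (what ⬝ᵥ x i)
          ≤ |φ (y i) (whati i ⬝ᵥ x i) - φ (y i) (a i)| := le_abs_self _
        _ ≤ ρ * |c i| := hnorm
    -- Cauchy–Schwarz
    have hcs : (c i)^2 ≤ (v ⬝ᵥ v) * (x i ⬝ᵥ x i) := by
      have h1 := Finset.sum_mul_sq_le_sq_mul_sq Finset.univ v (x i)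
      have e2 : c i = ∑ k, v k * x i k := rfl
      have e3 : v ⬝ᵥ v = ∑ k, (v k)^2 := by
        simp [dotProduct, pow_two]
      have e4 : x i ⬝ᵥ x i = ∑ k, (x i k)^2 := by
        simp [dotProduct, pow_two]
      rw [e2, e3, e4]
      exact h1
    -- quadratic bound in terms of c
    have hquad' : (n:ℝ) * lam * (v ⬝ᵥ v) ≤ ∑ j, (c j)^2 := by
      have h1 := hquad v
      have h2 : ∑ j, (x j ⬝ᵥ v)^2 = ∑ j, (c j)^2 :=
        Finset.sum_congr rfl fun j _ => by rw [dotProduct_comm]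
      linarith [h2 ▸ h1]
    -- numeric conclusion
    set T := φ (y i) (whati i ⬝ᵥ x i) - φ (y i) (what ⬝ᵥ x i) with hT
    have hXi : (0:ℝ) ≤ x i ⬝ᵥ x i :=
      Finset.sum_nonneg fun k _ => mul_self_nonneg _
    have hQ : (0:ℝ) ≤ v ⬝ᵥ v := Finset.sum_nonneg fun k _ => mul_self_nonneg _
    have hT1 : (α * n * lam) * (v ⬝ᵥ v) ≤ 2 * T := by
      have h1 : m / 2 ≤ T := by linarith
      have h2 : α * ((n:ℝ) * lam * (v ⬝ᵥ v)) ≤ α * ∑ j, (c j)^2 :=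
        mul_le_mul_of_nonneg_left hquad' (le_of_lt hα)
      rw [hmdef] at h1
      nlinarith
    rcases le_or_gt T 0 with hTle | hTpos
    · exact le_trans hTle (by positivity)
    · rw [le_div_iff₀ (by positivity)]
      have hTc : T ≤ ρ * |c i| := hmvt
      have f1 : T * T ≤ ρ^2 * (c i)^2 := by
        have h5 := mul_le_mul hTc hTc (le_of_lt hTpos) (by positivity : (0:ℝ) ≤ ρ * |c i|)
        nlinarith [sq_abs (c i)]
      have f5 : T * ((α*(n:ℝ)*lam)*T) ≤ T * (2*ρ^2*(x i ⬝ᵥ x i)) := by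
        calc T * ((α*(n:ℝ)*lam)*T) = (α*(n:ℝ)*lam)*(T*T) := by ring
          _ ≤ (α*(n:ℝ)*lam)*(ρ^2*(c i)^2) := by
              exact mul_le_mul_of_nonneg_left f1 (by positivity)
          _ ≤ (α*(n:ℝ)*lam)*(ρ^2*((v ⬝ᵥ v)*(x i ⬝ᵥ x i))) := by
              exact mul_le_mul_of_nonneg_left
                (mul_le_mul_of_nonneg_left hcs (by positivity)) (by positivity)
          _ = ((α*(n:ℝ)*lam)*(v ⬝ᵥ v))*(ρ^2*(x i ⬝ᵥ x i)) := by ring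
          _ ≤ (2*T)*(ρ^2*(x i ⬝ᵥ x i)) := by
              exact mul_le_mul_of_nonneg_right hT1 (by positivity)
          _ = T * (2*ρ^2*(x i ⬝ᵥ x i)) := by ring
      have f6 := (mul_le_mul_iff_right₀ hTpos).mp f5
      calc T * (α*(n:ℝ)*lam) = (α*(n:ℝ)*lam)*T := by ring
        _ ≤ 2*ρ^2*(x i ⬝ᵥ x i) := f6
  -- assemble
  have hsum : ∑ i : Fin n, (φ (y i) (whati i ⬝ᵥ x i) - φ (y i) (what ⬝ᵥ x i))
      ≤ ∑ i : Fin n, 2 * ρ^2 * (x i ⬝ᵥ x i) / (α * n * lam) :=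
    Finset.sum_le_sum fun i _ => key i
  have htr : C.trace = (1/n : ℝ) * ∑ i, (x i ⬝ᵥ x i) := by
    rw [hC]; exact trace_eq x
  have hfinal : (1/n : ℝ) * ∑ i : Fin n, 2 * ρ^2 * (x i ⬝ᵥ x i) / (α * n * lam)
      = (2 * ρ ^ 2 / (α * n)) * (C.trace / lam) := by
    rw [htr, ← Finset.sum_div, ← Finset.mul_sum]
    field_simp
  calc (1 / n : ℝ) * ∑ i : Fin n, (φ (y i) (whati i ⬝ᵥ x i) - φ (y i) (what ⬝ᵥ x i))
      ≤ (1/n : ℝ) * ∑ i : Fin n, 2 * ρ^2 * (x i ⬝ᵥ x i) / (α * n * lam) :=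
        mul_le_mul_of_nonneg_left hsum (by positivity)
    _ = (2 * ρ ^ 2 / (α * n)) * (C.trace / lam) := hfinal
end

section
/- Let W ⊆ ℝ^d be a convex set, let f_1,…,f_n : ℝ^d → ℝ be convex functions such that f_i is ρ̂_i-Lipschitz on W for each i, and suppose F = (1/n)·Σ_{j=1}^n f_j is μ̂-strongly convex on W with μ̂ > 0. Let ŵ ∈ W minimize F over W, and for each i let ŵ_i ∈ W minimize Σ_{j≠i} f_j over W. Then for every i ∈ {1,…,n}: f_i(ŵ_i) − f_i(ŵ) ≤ 2ρ̂_i²/(n·μ̂). -/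
lemma strong_min_aux {E : Type*} [NormedAddCommGroup E] [InnerProductSpace ℝ E]
    {W : Set E} (hW : Convex ℝ W) {F : E → ℝ} {μ : ℝ}
    (hSC : ConvexOn ℝ W (fun w => F w - μ / 2 * ‖w‖ ^ 2))
    {x : E} (hx : x ∈ W) (hmin : IsMinOn F W x) {w : E} (hw : w ∈ W) :
    μ / 2 * ‖w - x‖ ^ 2 ≤ F w - F x := by
  have key : ∀ t : ℝ, t ∈ Set.Ioo (0:ℝ) 1 → μ / 2 * (1 - t) * ‖w - x‖ ^ 2 ≤ F w - F x := by
    intro t ht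
    obtain ⟨ht0, ht1⟩ := ht
    have h1t : (0:ℝ) < 1 - t := by linarith
    have hmem : t • w + (1 - t) • x ∈ W := hW hw hx (le_of_lt ht0) (le_of_lt h1t) (by ring)
    have hG := hSC.2 hw hx (le_of_lt ht0) (le_of_lt h1t) (by ring)
    simp only [smul_eq_mul] at hG
    have hFmin : F x ≤ F (t • w + (1 - t) • x) := hmin hmem
    have hnorm : ‖t • w + (1 - t) • x‖ ^ 2
        = t * ‖w‖ ^ 2 + (1 - t) * ‖x‖ ^ 2 - t * (1 - t) * ‖w - x‖ ^ 2 := by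
      have e2 : ‖w - x‖ ^ 2 = ‖w‖^2 - 2 * inner ℝ w x + ‖x‖^2 := by
        rw [norm_sub_sq_real]; try ring
      rw [norm_add_sq_real, norm_smul, norm_smul, real_inner_smul_left, real_inner_smul_right,
        Real.norm_eq_abs, Real.norm_eq_abs, abs_of_pos ht0, abs_of_pos h1t, e2]
      ring
    rw [hnorm] at hG
    have h : t * (μ / 2 * (1 - t) * ‖w - x‖ ^ 2) ≤ t * (F w - F x) := by nlinarith [hG, hFmin]
    exact le_of_mul_le_mul_left h ht0
  have h1 : Filter.Tendsto (fun k : ℕ => 1/((k:ℝ)+2)) Filter.atTop (nhds 0) := by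
    have := (Filter.tendsto_add_atTop_iff_nat 1).2 (tendsto_one_div_add_atTop_nhds_zero_nat (𝕜 := ℝ))
    convert this using 2 with k
    push_cast; ring
  have htend : Filter.Tendsto (fun k : ℕ => μ / 2 * (1 - 1/((k:ℝ)+2)) * ‖w - x‖ ^ 2)
      Filter.atTop (nhds (μ / 2 * ‖w - x‖ ^ 2)) := by
    have := ((((tendsto_const_nhds : Filter.Tendsto (fun _ : ℕ => (1:ℝ)) Filter.atTop
      (nhds 1)).sub h1).const_mul (μ/2)).mul_const) (‖w - x‖ ^ 2)
    simpa using this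
  refine le_of_tendsto htend (Filter.Eventually.of_forall fun k => ?_)
  refine key _ ⟨by positivity, ?_⟩
  rw [div_lt_one (by positivity)]
  linarith [Nat.cast_nonneg (α := ℝ) k]

/-- Let `W ⊆ ℝ^d` be convex, let `f_1, …, f_n` be convex functions with
`f_i` being `ρ̂_i`-Lipschitz on `W`, and suppose `F = (1/n)·∑ f_j` is `μ̂`-strongly convex on
`W` (i.e. `F - (μ̂/2)·‖·‖²` is convex on `W`) with `μ̂ > 0`. If `ŵ ∈ W` minimizes `F` over `W`
and `ŵ_i ∈ W` minimizes `∑_{j≠i} f_j` over `W`, then for every `i`,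
`f_i(ŵ_i) − f_i(ŵ) ≤ 2ρ̂_i²/(n·μ̂)`. -/
theorem uniform_leave_one_out_stability_of_strongly_convex
    (d n : ℕ) (W : Set (EuclideanSpace ℝ (Fin d))) (hWconv : Convex ℝ W)
    (f : Fin n → EuclideanSpace ℝ (Fin d) → ℝ)
    (hfconv : ∀ i, ConvexOn ℝ Set.univ (f i))
    (ρhat : Fin n → ℝ)
    (hLip : ∀ i, ∀ u ∈ W, ∀ v ∈ W, |f i u - f i v| ≤ ρhat i * ‖u - v‖)
    (μhat : ℝ) (hμ : 0 < μhat)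
    (hSC : ConvexOn ℝ W
      (fun w => (1 / n : ℝ) * ∑ j : Fin n, f j w - μhat / 2 * ‖w‖ ^ 2))
    (what : EuclideanSpace ℝ (Fin d)) (hwhatW : what ∈ W)
    (hwhat : IsMinOn (fun w => (1 / n : ℝ) * ∑ j : Fin n, f j w) W what)
    (whati : Fin n → EuclideanSpace ℝ (Fin d)) (hwhatiW : ∀ i, whati i ∈ W)
    (hwhati : ∀ i, IsMinOn (fun w => ∑ j ∈ Finset.univ.erase i, f j w) W (whati i)) :
    ∀ i : Fin n, f i (whati i) - f i what ≤ 2 * (ρhat i) ^ 2 / (n * μhat) := by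
  intro i
  have hn : (0:ℝ) < n := by exact_mod_cast i.pos
  set r : ℝ := ‖whati i - what‖ with hr_def
  have hr : 0 ≤ r := norm_nonneg _
  set D : ℝ := f i (whati i) - f i what with hD_def
  set ρ : ℝ := ρhat i
  -- strong convexity at the minimizer
  have hkey : μhat / 2 * r ^ 2 ≤
      (1 / n : ℝ) * ∑ j : Fin n, f j (whati i) - (1 / n : ℝ) * ∑ j : Fin n, f j what :=
    strong_min_aux hWconv hSC hwhatW hwhat (hwhatiW i)
  -- split the sums
  have hEi : ∑ j ∈ Finset.univ.erase i, f j (whati i) + f i (whati i)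
      = ∑ j : Fin n, f j (whati i) := Finset.sum_erase_add _ _ (Finset.mem_univ i)
  have hEw : ∑ j ∈ Finset.univ.erase i, f j what + f i what
      = ∑ j : Fin n, f j what := Finset.sum_erase_add _ _ (Finset.mem_univ i)
  have hmin2 : ∑ j ∈ Finset.univ.erase i, f j (whati i)
      ≤ ∑ j ∈ Finset.univ.erase i, f j what := hwhati i hwhatW
  have hA : μhat / 2 * r ^ 2 ≤ (1 / n : ℝ) * D := by
    rw [← hEi, ← hEw] at hkey
    have h2 := mul_le_mul_of_nonneg_left hmin2 (by positivity : (0:ℝ) ≤ 1 / (n:ℝ))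
    have hexp : (1 / n : ℝ) * (∑ j ∈ Finset.univ.erase i, f j (whati i) + f i (whati i))
        - (1 / n : ℝ) * (∑ j ∈ Finset.univ.erase i, f j what + f i what)
        = (1 / n : ℝ) * (∑ j ∈ Finset.univ.erase i, f j (whati i))
          - (1 / n : ℝ) * (∑ j ∈ Finset.univ.erase i, f j what) + (1 / n : ℝ) * D := by
      rw [hD_def]; ring
    rw [hexp] at hkey
    linarith
  have hA' : μhat * ((n:ℝ) * r ^ 2) ≤ 2 * D := by
    have h3 := mul_le_mul_of_nonneg_left hA (le_of_lt hn)
    have hne : (n:ℝ) ≠ 0 := ne_of_gt hn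
    have : (n:ℝ) * ((1 / n : ℝ) * D) = D := by field_simp
    rw [this] at h3
    nlinarith [h3]
  have hB : D ≤ ρ * r := by
    have := (abs_le.mp (hLip i (whati i) (hwhatiW i) what hwhatW)).2
    simpa [hD_def, hr_def] using this
  have hmain : D * ((n:ℝ) * μhat) ≤ 2 * ρ ^ 2 := by
    rcases eq_or_lt_of_le hr with hr0 | hr0
    · -- r = 0
      have hD0 : D ≤ 0 := by rw [← hr0] at hB; simpa using hB
      nlinarith [sq_nonneg ρ, mul_pos hn hμ]
    · -- r > 0
      have h2 : 0 ≤ 2 * ρ - μhat * (n:ℝ) * r := by nlinarith [hA', hB, hr0]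
      have hρ : 0 ≤ ρ := by nlinarith [h2, mul_nonneg (mul_nonneg hμ.le hn.le) hr]
      nlinarith [hB, mul_pos hn hμ, mul_nonneg h2 hρ, h2, hρ]
  rw [div_eq_mul_inv]
  rw [← le_div_iff₀ (mul_pos hn hμ)] at hmain
  calc D ≤ 2 * ρ ^ 2 / ((n:ℝ) * μhat) := hmain
    _ = 2 * ρ ^ 2 * ((n:ℝ) * μhat)⁻¹ := by rw [div_eq_mul_inv]
end

section
/- Let Ĉ be a symmetric positive semidefinite d×d matrix and δ > 0, and set P = Ĉ + δ·(I − ĈĈ†), where Ĉ† is the Moore–Penrose pseudoinverse of Ĉ. Then P is symmetric positive definite, P^{−1/2}ĈP^{−1/2} equals the orthogonal projection onto the column space of Ĉ, and consequently κ(P^{−1/2}ĈP^{−1/2}) = tr(P^{−1/2}ĈP^{−1/2})/λ_min(P^{−1/2}ĈP^{−1/2}) = rank(Ĉ), where λ_min denotes the smallest nonzero eigenvalue. -/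
open Matrix

/-- The condition number of a positive semidefinite matrix: the ratio of its trace to its
smallest *nonzero* eigenvalue. -/
noncomputable def condNumberNZ {d : ℕ} (A : Matrix (Fin d) (Fin d) ℝ) : ℝ :=
  A.trace / sInf {μ ∈ spectrum ℝ A | μ ≠ 0}

/-- The positive semidefinite square root of a positive semidefinite matrix
(Mathlib's former `Matrix.PosSemidef.sqrt`, removed upstream; restated with its old definition). -/
noncomputable def Matrix.PosSemidef.sqrt {n 𝕜 : Type*} [Fintype n] [RCLike 𝕜] [DecidableEq n]
    [PartialOrder 𝕜] [StarOrderedRing 𝕜]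
    {A : Matrix n n 𝕜} (hA : A.PosSemidef) : Matrix n n 𝕜 :=
  hA.1.eigenvectorUnitary.1 * diagonal ((↑) ∘ (√·) ∘ hA.1.eigenvalues) *
  (star hA.1.eigenvectorUnitary : Matrix n n 𝕜)

lemma Matrix.PosSemidef.psdSqrt_eq_cfc {n : Type*} [Fintype n] [DecidableEq n]
    {A : Matrix n n ℝ} (hA : A.PosSemidef) : hA.sqrt = cfc Real.sqrt A := by
  rw [hA.1.cfc_eq, IsHermitian.cfc, Unitary.conjStarAlgAut_apply]; rfl

lemma Matrix.PosSemidef.posSemidef_sqrt {n : Type*} [Fintype n] [DecidableEq n]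
    {A : Matrix n n ℝ} (hA : A.PosSemidef) : hA.sqrt.PosSemidef := by
  unfold Matrix.PosSemidef.sqrt
  have := (posSemidef_diagonal_iff.2 (fun i => Real.sqrt_nonneg (hA.1.eigenvalues i) :
    0 ≤ ((↑) ∘ (√·) ∘ hA.1.eigenvalues : n → ℝ))).mul_mul_conjTranspose_same
    (hA.1.eigenvectorUnitary : Matrix n n ℝ)
  rw [star_eq_conjTranspose]
  exact this

lemma Matrix.PosSemidef.sqrt_mul_self {n : Type*} [Fintype n] [DecidableEq n]
    {A : Matrix n n ℝ} (hA : A.PosSemidef) : hA.sqrt * hA.sqrt = A := by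
  have hsa : IsSelfAdjoint A := hA.1
  rw [hA.psdSqrt_eq_cfc, ← cfc_mul Real.sqrt Real.sqrt A]
  conv_rhs => rw [← cfc_id' ℝ A]
  refine cfc_congr fun x hx => ?_
  have hx0 : 0 ≤ x := by
    obtain ⟨i, rfl⟩ := hA.1.spectrum_real_eq_range_eigenvalues ▸ hx
    exact hA.eigenvalues_nonneg i
  exact Real.mul_self_sqrt hx0

lemma Matrix.PosSemidef.eq_sqrt_of_sq_eq {n : Type*} [Fintype n] [DecidableEq n]
    {A B : Matrix n n ℝ} (hB : B.PosSemidef) (hA : A.PosSemidef) (h : B ^ 2 = A) :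
    B = hA.sqrt := by
  have hsa : IsSelfAdjoint B := hB.1
  have e : B ^ 2 = cfc (fun x : ℝ => x * x) B := by
    rw [cfc_mul (fun x : ℝ => x) (fun x : ℝ => x) B, cfc_id' ℝ B, pow_two]
  rw [hA.psdSqrt_eq_cfc, ← h, e, ← cfc_comp Real.sqrt (fun x : ℝ => x * x) B]
  conv_lhs => rw [← cfc_id' ℝ B]
  refine cfc_congr fun x hx => ?_
  have hx0 : 0 ≤ x := by
    obtain ⟨i, rfl⟩ := hB.1.spectrum_real_eq_range_eigenvalues ▸ hx
    exact hB.eigenvalues_nonneg i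
  show x = Real.sqrt (x * x)
  rw [Real.sqrt_mul_self hx0]

lemma spec01 {d : ℕ} {Q : Matrix (Fin d) (Fin d) ℝ} (hQ2 : Q * Q = Q) :
    ∀ μ ∈ spectrum ℝ Q, μ = 0 ∨ μ = 1 := by
  intro μ hμ
  rw [spectrum.mem_iff] at hμ
  have hdet : (algebraMap ℝ (Matrix (Fin d) (Fin d) ℝ) μ - Q).det = 0 := by
    by_contra hd
    exact hμ ((Matrix.isUnit_iff_isUnit_det _).2 (isUnit_iff_ne_zero.2 hd))
  obtain ⟨v, hv0, hveq⟩ := (Matrix.exists_mulVec_eq_zero_iff).2 hdet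
  have hQv : Q *ᵥ v = μ • v := by
    have : (μ • (1 : Matrix (Fin d) (Fin d) ℝ) - Q) *ᵥ v = 0 := by
      rwa [Algebra.algebraMap_eq_smul_one] at hveq
    rw [sub_mulVec, smul_mulVec, one_mulVec] at this
    have h := sub_eq_zero.1 this
    rw [h]
  have h2 : (μ * μ) • v = μ • v := by
    have : Q *ᵥ (Q *ᵥ v) = Q *ᵥ v := by rw [mulVec_mulVec, hQ2]
    rwa [hQv, mulVec_smul, hQv, smul_smul] at this
  have hmm : μ * μ = μ := by
    have h := sub_eq_zero.2 h2
    rw [← sub_smul, smul_eq_zero] at h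
    rcases h with h | h
    · exact sub_eq_zero.1 h
    · exact absurd h hv0
  have : μ * (μ - 1) = 0 := by ring_nf; linarith [hmm]
  rcases mul_eq_zero.1 this with h | h
  · exact Or.inl h
  · exact Or.inr (by linarith [sub_eq_zero.1 h])

lemma condNumberNZ_proj {d : ℕ} {Q : Matrix (Fin d) (Fin d) ℝ} (hH : Q.IsHermitian)
    (hQ2 : Q * Q = Q) : condNumberNZ Q = Q.rank := by
  classical
  have heig : ∀ i, hH.eigenvalues i = 0 ∨ hH.eigenvalues i = 1 := fun i =>
    spec01 hQ2 _ (hH.eigenvalues_mem_spectrum_real i)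
  have htr : Q.trace = ∑ i, hH.eigenvalues i := by
    nth_rewrite 1 [hH.spectral_theorem]
    rw [Unitary.conjStarAlgAut_apply, Matrix.trace_mul_cycle, Unitary.coe_star_mul_self, one_mul, trace_diagonal]
    simp
  have hrk : (Q.rank : ℝ) = ∑ i, hH.eigenvalues i := by
    rw [hH.rank_eq_card_non_zero_eigs, Fintype.card_subtype]
    calc ((Finset.univ.filter (fun i => hH.eigenvalues i ≠ 0)).card : ℝ)
        = ∑ _i ∈ Finset.univ.filter (fun i => hH.eigenvalues i ≠ 0), (1:ℝ) := by
          rw [Finset.sum_const, nsmul_eq_mul, mul_one]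
      _ = ∑ i ∈ Finset.univ.filter (fun i => hH.eigenvalues i ≠ 0), hH.eigenvalues i := by
          refine Finset.sum_congr rfl fun i hi => ?_
          rcases heig i with h | h
          · exact absurd h (Finset.mem_filter.1 hi).2
          · rw [h]
      _ = ∑ i, hH.eigenvalues i := Finset.sum_filter_ne_zero _
  by_cases h0 : Q.trace = 0
  · rw [condNumberNZ, h0, zero_div, hrk, ← htr, h0]
  · have hone : (1 : ℝ) ∈ spectrum ℝ Q := by
      have : ∃ i, hH.eigenvalues i ≠ 0 := by
        by_contra hall
        push_neg at hall
        exact h0 (by rw [htr]; exact Finset.sum_eq_zero fun i _ => hall i)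
      obtain ⟨i, hi⟩ := this
      have := hH.eigenvalues_mem_spectrum_real i
      rcases heig i with h | h
      · exact absurd h hi
      · rwa [h] at this
    have hset : {μ ∈ spectrum ℝ Q | μ ≠ 0} = {1} := by
      ext μ
      constructor
      · rintro ⟨hs, hne⟩
        rcases spec01 hQ2 μ hs with h | h
        · exact absurd h hne
        · exact h
      · rintro rfl
        exact ⟨hone, one_ne_zero⟩
    rw [condNumberNZ, hset, csInf_singleton, div_one, hrk, ← htr]

/-- Let `Ĉ` be symmetric positive semidefinite, `δ > 0`, and
`P = Ĉ + δ·(I − ĈĈ†)`, where `Ĉ†` is the Moore–Penrose pseudoinverse of `Ĉ` (characterized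
by the four Penrose conditions). Then `P` is symmetric positive definite,
`P^{-1/2}ĈP^{-1/2}` equals `ĈĈ†`, the orthogonal projection onto the column space of `Ĉ`,
and consequently `κ(P^{-1/2}ĈP^{-1/2}) = tr(·)/λ_min(·) = rank(Ĉ)`, where `λ_min` is the
smallest nonzero eigenvalue. -/
theorem preconditioning_rank_deficient_covariance
    (d : ℕ) (C : Matrix (Fin d) (Fin d) ℝ) (hC : C.PosSemidef)
    (δ : ℝ) (hδ : 0 < δ)
    (Cdag : Matrix (Fin d) (Fin d) ℝ)
    (hMP1 : C * Cdag * C = C)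
    (hMP2 : Cdag * C * Cdag = Cdag)
    (hMP3 : (C * Cdag)ᴴ = C * Cdag)
    (hMP4 : (Cdag * C)ᴴ = Cdag * C)
    (P : Matrix (Fin d) (Fin d) ℝ)
    (hPdef : P = C + δ • ((1 : Matrix (Fin d) (Fin d) ℝ) - C * Cdag)) :
    P.PosDef
    ∧ ∀ (hP : P.PosDef),
        (hP.posSemidef.sqrt)⁻¹ * C * (hP.posSemidef.sqrt)⁻¹ = C * Cdag
        ∧ condNumberNZ ((hP.posSemidef.sqrt)⁻¹ * C * (hP.posSemidef.sqrt)⁻¹) = C.rank := by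
  classical
  set Q := C * Cdag with hQdef
  have hQH : Qᴴ = Q := hMP3
  have hQ2 : Q * Q = Q := by
    calc Q * Q = (C * Cdag * C) * Cdag := by rw [hQdef]; noncomm_ring
      _ = Q := by rw [hMP1]
  have hQC : Q * C = C := hMP1
  have hCH : Cᴴ = C := hC.1
  have hCQ : C * Q = C := by
    have h := congrArg conjTranspose hQC
    rwa [conjTranspose_mul, hQH, hCH] at h
  set R := hC.sqrt with hRdef
  have hRH : Rᴴ = R := hC.posSemidef_sqrt.1
  have hRR : R * R = C := hC.sqrt_mul_self
  have hRQ : R * Q = R := by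
    have hM : (R * (1 - Q))ᴴ * (R * (1 - Q)) = 0 := by
      rw [conjTranspose_mul, conjTranspose_sub, conjTranspose_one, hQH, hRH]
      have h1 : (1 - Q) * R * (R * (1 - Q)) = ((1 - Q) * C) * (1 - Q) := by
        rw [← hRR]; noncomm_ring
      rw [h1, sub_mul, one_mul, hQC, sub_self, zero_mul]
    have h := Matrix.conjTranspose_mul_self_eq_zero.1 hM
    rw [mul_sub, mul_one, sub_eq_zero] at h
    exact h.symm
  have hQR : Q * R = R := by
    have h := congrArg conjTranspose hRQ
    rwa [conjTranspose_mul, hQH, hRH] at h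
  have hioq : (1 - Q) * (1 - Q) = 1 - Q := by
    have h : (1 - Q) * (1 - Q) = 1 - Q - Q + Q * Q := by noncomm_ring
    rw [h, hQ2]; abel
  set s := Real.sqrt δ with hs
  have hss : s * s = δ := Real.mul_self_sqrt hδ.le
  set B := R + s • (1 - Q) with hBdef
  have hBH : Bᴴ = B := by
    rw [hBdef, conjTranspose_add, conjTranspose_smul, conjTranspose_sub, conjTranspose_one,
      hQH, hRH, star_trivial]
  have hBB : B * B = P := by
    have e1 : R * (s • (1 - Q)) = 0 := by
      rw [Matrix.mul_smul, mul_sub, mul_one, hRQ, sub_self, smul_zero]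
    have e2 : (s • (1 - Q)) * R = 0 := by
      rw [Matrix.smul_mul, sub_mul, one_mul, hQR, sub_self, smul_zero]
    have e3 : (s • (1 - Q)) * (s • (1 - Q)) = δ • (1 - Q) := by
      rw [Matrix.smul_mul, Matrix.mul_smul, hioq, smul_smul, hss]
    rw [hBdef, hPdef, add_mul, mul_add, mul_add, e1, e2, e3, hRR, add_zero, zero_add]
  have hQT : (1 - Q)ᵀ = 1 - Q := by
    rw [← conjTranspose_eq_transpose_of_trivial, conjTranspose_sub, conjTranspose_one, hQH]
  have hproj : ∀ x : Fin d → ℝ,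
      x ⬝ᵥ (1 - Q) *ᵥ x = ((1 - Q) *ᵥ x) ⬝ᵥ ((1 - Q) *ᵥ x) := by
    intro x
    calc x ⬝ᵥ (1 - Q) *ᵥ x = x ⬝ᵥ ((1 - Q) * (1 - Q)) *ᵥ x := by rw [hioq]
      _ = x ⬝ᵥ (1 - Q) *ᵥ ((1 - Q) *ᵥ x) := by rw [mulVec_mulVec]
      _ = (x ᵥ* (1 - Q)) ⬝ᵥ ((1 - Q) *ᵥ x) := by rw [dotProduct_mulVec]
      _ = ((1 - Q) *ᵥ x) ⬝ᵥ ((1 - Q) *ᵥ x) := by rw [← mulVec_transpose, hQT]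
  have hPpos : P.PosDef := by
    rw [posDef_iff_dotProduct_mulVec]
    constructor
    · rw [hPdef]
      rw [IsHermitian, conjTranspose_add, conjTranspose_smul, conjTranspose_sub,
        conjTranspose_one, hQH, hCH, star_trivial]
    · intro x hx
      have hsx : star x = x := by
        funext i; exact star_trivial _
      rw [hsx, hPdef, add_mulVec, dotProduct_add, smul_mulVec, dotProduct_smul,
        smul_eq_mul, hproj x]
      set w := (1 - Q) *ᵥ x with hw
      have hCx : 0 ≤ x ⬝ᵥ C *ᵥ x := by
        have := hC.dotProduct_mulVec_nonneg x
        rwa [hsx] at this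
      have hwnn : 0 ≤ w ⬝ᵥ w := Finset.sum_nonneg fun i _ => mul_self_nonneg _
      by_cases hww : w = 0
      · have hxQ : Q *ᵥ x = x := by
          have h : (1 - Q) *ᵥ x = 0 := hww
          rw [sub_mulVec, one_mulVec, sub_eq_zero] at h
          exact h.symm
        have hCx0 : C *ᵥ x ≠ 0 := by
          intro hc
          apply hx
          have hQdec : Q = Cdagᴴ * C := by
            rw [← hQH, hQdef, conjTranspose_mul, hCH]
          rw [← hxQ, hQdec, ← mulVec_mulVec, hc, mulVec_zero]
        have hne : x ⬝ᵥ C *ᵥ x ≠ 0 := by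
          intro h
          exact hCx0 ((hC.dotProduct_mulVec_zero_iff x).1 (by rwa [hsx]))
        have : 0 < x ⬝ᵥ C *ᵥ x := lt_of_le_of_ne hCx (Ne.symm hne)
        rw [hww]
        simpa using this
      · have hwp : 0 < w ⬝ᵥ w :=
          lt_of_le_of_ne hwnn (Ne.symm fun h => hww (dotProduct_self_eq_zero.1 h))
        have := mul_pos hδ hwp
        linarith
  refine ⟨hPpos, fun hP => ?_⟩
  have hBpsd : B.PosSemidef := by
    rw [posSemidef_iff_dotProduct_mulVec]
    constructor
    · exact hBH
    · intro x
      have hsx : star x = x := by funext i; exact star_trivial _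
      rw [hsx, hBdef, add_mulVec, dotProduct_add, smul_mulVec, dotProduct_smul,
        smul_eq_mul, hproj x]
      have h1 : 0 ≤ x ⬝ᵥ R *ᵥ x := by
        have := hC.posSemidef_sqrt.dotProduct_mulVec_nonneg x
        rwa [hsx] at this
      have h2 : 0 ≤ ((1 - Q) *ᵥ x) ⬝ᵥ ((1 - Q) *ᵥ x) :=
        Finset.sum_nonneg fun i _ => mul_self_nonneg _
      exact add_nonneg h1 (mul_nonneg (Real.sqrt_nonneg δ) h2)
  have hSB : hP.posSemidef.sqrt = B :=
    (hBpsd.eq_sqrt_of_sq_eq hP.posSemidef (by rw [pow_two, hBB])).symm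
  have hdetB : IsUnit B.det := by
    have hmul : B.det * B.det = P.det := by rw [← det_mul, hBB]
    refine isUnit_iff_ne_zero.2 fun h => ?_
    rw [h, mul_zero] at hmul
    exact hP.det_pos.ne' hmul.symm
  have hBiB : B⁻¹ * B = 1 := nonsing_inv_mul B hdetB
  have hBBi : B * B⁻¹ = 1 := mul_nonsing_inv B hdetB
  have hBQB : B * Q * B = C := by
    have hBQ : B * Q = R := by
      rw [hBdef, add_mul, Matrix.smul_mul, sub_mul, one_mul, hQ2, sub_self, smul_zero,
        add_zero, hRQ]
    rw [hBQ, hBdef, mul_add, Matrix.mul_smul, mul_sub, mul_one, hRQ, sub_self, smul_zero,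
      add_zero, hRR]
  have hmain : B⁻¹ * C * B⁻¹ = Q := by
    rw [← hBQB]
    have h : B⁻¹ * (B * Q * B) * B⁻¹ = (B⁻¹ * B) * Q * (B * B⁻¹) := by noncomm_ring
    rw [h, hBiB, hBBi, one_mul, mul_one]
  have hrQC : Q.rank = C.rank := by
    refine le_antisymm ?_ ?_
    · rw [hQdef]; exact rank_mul_le_left C Cdag
    · conv_lhs => rw [← hQC]
      exact rank_mul_le_left Q C
  constructor
  · rw [hSB]; exact hmain
  · rw [hSB, hmain, condNumberNZ_proj (show Q.IsHermitian from hQH) hQ2, hrQC]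
end

section
/- For every sample S ∈ (X×Y)^n and any choice of the minimizers ŵ and ŵ_1,…,ŵ_n, the average stability satisfies the dimension-dependent bound Δ(S,W) ≤ 2ρ²·d/(α·n). (This follows by combining the preconditioning invariance of Δ with the condition-number stability bound applied after preconditioning by the empirical covariance Ĉ = (1/n)·Σ x_i x_iᵀ, for which the preconditioned condition number is rank(Ĉ) ≤ d.) -/
open Matrix

open scoped RealInnerProductSpace


section Aux

/-- One-sided first-order optimality at the left endpoint. -/
lemma aux_deriv_nonneg (f : ℝ → ℝ) (f' : ℝ) (hf : HasDerivAt f f' 0)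
    (h : ∀ t ∈ Set.Ioo (0:ℝ) 1, f 0 ≤ f t) : 0 ≤ f' := by
  haveI : (nhdsWithin (0:ℝ) (Set.Ioo 0 1)).NeBot := by
    refine mem_closure_iff_nhdsWithin_neBot.mp ?_
    rw [closure_Ioo (by norm_num : (0:ℝ) ≠ 1)]
    exact ⟨le_refl 0, by norm_num⟩
  have h1 : Filter.Tendsto (slope f 0) (nhdsWithin 0 (Set.Ioo 0 1)) (nhds f') :=
    (hasDerivAt_iff_tendsto_slope.mp hf).mono_left
      (nhdsWithin_mono _ (fun z hz => ne_of_gt hz.1))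
  refine ge_of_tendsto h1 ?_
  filter_upwards [self_mem_nhdsWithin] with t ht
  have ht0 : (0:ℝ) < t := ht.1
  rw [slope_def_field]
  have := h t ht
  have : 0 ≤ f t - f 0 := by linarith
  exact div_nonneg (by linarith) (by linarith)

/-- One-sided first-order optimality at the right endpoint. -/
lemma aux_deriv_nonpos (f : ℝ → ℝ) (f' : ℝ) (hf : HasDerivAt f f' 1)
    (h : ∀ t ∈ Set.Ioo (0:ℝ) 1, f 1 ≤ f t) : f' ≤ 0 := by
  haveI : (nhdsWithin (1:ℝ) (Set.Ioo 0 1)).NeBot := by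
    refine mem_closure_iff_nhdsWithin_neBot.mp ?_
    rw [closure_Ioo (by norm_num : (0:ℝ) ≠ 1)]
    exact ⟨by norm_num, le_refl 1⟩
  have h1 : Filter.Tendsto (slope f 1) (nhdsWithin 1 (Set.Ioo 0 1)) (nhds f') :=
    (hasDerivAt_iff_tendsto_slope.mp hf).mono_left
      (nhdsWithin_mono _ (fun z hz => ne_of_lt hz.2))
  refine le_of_tendsto h1 ?_
  filter_upwards [self_mem_nhdsWithin] with t ht
  rw [slope_def_field]
  have h2 := h t ht
  have ht1 : t - 1 < 0 := by linarith [ht.2]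
  have : f t - f 1 ≥ 0 := by linarith
  exact div_nonpos_of_nonneg_of_nonpos this (by linarith)

lemma aux_hasDerivAt_affine (f : ℝ → ℝ) (hf : ∀ z, DifferentiableAt ℝ f z)
    (c m t : ℝ) : HasDerivAt (fun s => f (c + s * m)) (deriv f (c + t * m) * m) t := by
  have h1 : HasDerivAt (fun s : ℝ => c + s * m) m t := by
    simpa using ((hasDerivAt_id t).mul_const m).const_add c
  exact (hf (c + t * m)).hasDerivAt.comp t h1

/-- Sum of squared norms of projections of the standard basis equals the dimension. -/
lemma proj_trace {n : ℕ} (U : Submodule ℝ (EuclideanSpace ℝ (Fin n)))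
    [FiniteDimensional ℝ U] :
    ∑ i : Fin n,
      ‖(U.orthogonalProjectionOnto (EuclideanSpace.single i 1) : EuclideanSpace ℝ (Fin n))‖ ^ 2
      = (Module.finrank ℝ U : ℝ) := by
  set E := EuclideanSpace ℝ (Fin n)
  let b := stdOrthonormalBasis ℝ U
  have hsq : ∀ u : E, ‖u‖ ^ 2 = ∑ i : Fin n, (u i) ^ 2 := by
    intro u
    rw [EuclideanSpace.norm_eq, Real.sq_sqrt (by positivity)]
    simp [sq_abs]
  have hPnorm : ∀ v : E,
      ‖(U.orthogonalProjectionOnto v : E)‖ ^ 2 = ∑ k, ⟪(b k : E), v⟫ ^ 2 := by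
    intro v
    have hP := b.orthogonalProjectionOnto_apply_eq_sum v
    have hPc : (U.orthogonalProjectionOnto v : E) = ∑ k, ⟪(b k : E), v⟫ • (b k : E) := by
      rw [hP]; push_cast [Submodule.coe_sum, Submodule.coe_smul]; rfl
    rw [← real_inner_self_eq_norm_sq, hPc]
    rw [inner_sum]
    congr 1; funext k
    rw [real_inner_smul_right, sum_inner]
    have : ∀ k', ⟪(⟪(b k' : E), v⟫ • (b k' : E)), (b k : E)⟫
        = ⟪(b k' : E), v⟫ * (if k' = k then (1:ℝ) else 0) := by
      intro k'
      rw [real_inner_smul_left]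
      congr 1
      have := (stdOrthonormalBasis ℝ U).orthonormal
      rcases eq_or_ne k' k with h | h
      · subst h
        simp only [if_pos rfl]
        have h1 : ‖b k'‖ = 1 := this.1 k'
        have : ⟪(b k' : E), (b k' : E)⟫ = ‖(b k' : E)‖ ^ 2 := real_inner_self_eq_norm_sq _
        rw [this]
        rw [show ‖(b k' : E)‖ = ‖b k'‖ from rfl, h1]; norm_num
      · simp only [if_neg h]
        have h2 : ⟪b k', b k⟫ = (0:ℝ) := this.2 h
        simpa [Submodule.coe_inner] using h2
    simp only [this]
    simp [sq]
  calc ∑ i : Fin n, ‖(U.orthogonalProjectionOnto (EuclideanSpace.single i 1) : E)‖ ^ 2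
      = ∑ i : Fin n, ∑ k, ⟪(b k : E), EuclideanSpace.single i 1⟫ ^ 2 := by
        simp only [hPnorm]
    _ = ∑ k, ∑ i : Fin n, ((b k : E) i) ^ 2 := by
        rw [Finset.sum_comm]
        congr 1; funext k; congr 1; funext i
        congr 1
        simp [EuclideanSpace.inner_single_right]
    _ = ∑ k, ‖(b k : E)‖ ^ 2 := by
        congr 1; funext k; rw [hsq]
    _ = (Module.finrank ℝ U : ℝ) := by
        have : ∀ k, ‖(b k : E)‖ = 1 := fun k => b.orthonormal.1 k
        simp [this]

end Aux

section PerIndex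

lemma per_index {n d : ℕ} {ρ α : ℝ} (hρ : 0 < ρ) (hα : 0 < α)
    {W : Set (Fin d → ℝ)} (hWconv : Convex ℝ W)
    (x : Fin n → Fin d → ℝ) (f : Fin n → ℝ → ℝ)
    (hdiff : ∀ j z, DifferentiableAt ℝ (f j) z)
    (hdiff2 : ∀ j z, DifferentiableAt ℝ (deriv (f j)) z)
    (hA1 : ∀ j, ∀ w ∈ W, |deriv (f j) (w ⬝ᵥ x j)| ≤ ρ)
    (hA2 : ∀ j, ∀ w ∈ W, α ≤ deriv (deriv (f j)) (w ⬝ᵥ x j))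
    (i : Fin n)
    {what : Fin d → ℝ} (hwhatW : what ∈ W)
    (hwhat : ∀ w ∈ W, ∑ j, f j (what ⬝ᵥ x j) ≤ ∑ j, f j (w ⬝ᵥ x j))
    {wi : Fin d → ℝ} (hwiW : wi ∈ W)
    (hwi : ∀ w ∈ W, ∑ j ∈ Finset.univ.erase i, f j (wi ⬝ᵥ x j)
      ≤ ∑ j ∈ Finset.univ.erase i, f j (w ⬝ᵥ x j)) :
    f i (wi ⬝ᵥ x i) - f i (what ⬝ᵥ x i) ≤ ρ * |(wi - what) ⬝ᵥ x i| ∧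
    α * ∑ j, ((wi - what) ⬝ᵥ x j) ^ 2 ≤ ρ * |(wi - what) ⬝ᵥ x i| := by
  set v : Fin d → ℝ := wi - what with hv
  set c : Fin n → ℝ := fun j => what ⬝ᵥ x j with hc
  set m : Fin n → ℝ := fun j => v ⬝ᵥ x j with hm
  have hkey : ∀ (t : ℝ) (j : Fin n), (what + t • v) ⬝ᵥ x j = c j + t * m j := by
    intro t j
    simp [hc, hm, add_dotProduct, smul_dotProduct]
  have hwiv : ∀ j, c j + m j = wi ⬝ᵥ x j := by
    intro j
    simp [hc, hm, hv, sub_dotProduct]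
  have hpath : ∀ t ∈ Set.Icc (0:ℝ) 1, what + t • v ∈ W := by
    intro t ht
    exact hWconv.add_smul_sub_mem hwhatW hwiW ht
  -- the four auxiliary functions
  set ψ : ℝ → ℝ := fun t => ∑ j, f j (c j + t * m j) with hψdef
  set D : ℝ → ℝ := fun t => ∑ j, deriv (f j) (c j + t * m j) * m j with hDdef
  set D2 : ℝ → ℝ := fun t => ∑ j, deriv (deriv (f j)) (c j + t * m j) * m j * m j with hD2def
  set χ : ℝ → ℝ := fun t => ∑ j ∈ Finset.univ.erase i, f j (c j + t * m j) with hχdef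
  set Dχ : ℝ → ℝ := fun t =>
    ∑ j ∈ Finset.univ.erase i, deriv (f j) (c j + t * m j) * m j with hDχdef
  have hψ : ∀ t, HasDerivAt ψ (D t) t := fun t =>
    HasDerivAt.fun_sum (fun j _ => aux_hasDerivAt_affine (f j) (hdiff j) (c j) (m j) t)
  have hD : ∀ t, HasDerivAt D (D2 t) t := fun t =>
    HasDerivAt.fun_sum (fun j _ =>
      (aux_hasDerivAt_affine (deriv (f j)) (hdiff2 j) (c j) (m j) t).mul_const (m j))
  have hχ : ∀ t, HasDerivAt χ (Dχ t) t := fun t =>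
    HasDerivAt.fun_sum (fun j _ => aux_hasDerivAt_affine (f j) (hdiff j) (c j) (m j) t)
  -- first-order optimality at `what`
  have h0 : 0 ≤ D 0 := by
    refine aux_deriv_nonneg ψ (D 0) (hψ 0) ?_
    intro t ht
    have e0 : ψ 0 = ∑ j, f j (what ⬝ᵥ x j) := by
      simp only [hψdef]
      exact Finset.sum_congr rfl fun j _ => by rw [zero_mul, add_zero]
    have et : ψ t = ∑ j, f j ((what + t • v) ⬝ᵥ x j) := by
      simp only [hψdef, hkey]
    rw [e0, et]
    exact hwhat _ (hpath t ⟨ht.1.le, ht.2.le⟩)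
  -- first-order optimality at `wi`
  have h1 : Dχ 1 ≤ 0 := by
    refine aux_deriv_nonpos χ (Dχ 1) (hχ 1) ?_
    intro t ht
    have e1 : χ 1 = ∑ j ∈ Finset.univ.erase i, f j (wi ⬝ᵥ x j) := by
      simp only [hχdef]
      exact Finset.sum_congr rfl fun j _ => by rw [one_mul, hwiv]
    have et : χ t = ∑ j ∈ Finset.univ.erase i, f j ((what + t • v) ⬝ᵥ x j) := by
      simp only [hχdef, hkey]
    rw [e1, et]
    exact hwi _ (hpath t ⟨ht.1.le, ht.2.le⟩)
  -- bound on D 1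
  have hsplit : Dχ 1 + deriv (f i) (c i + 1 * m i) * m i = D 1 :=
    Finset.sum_erase_add _ _ (Finset.mem_univ i)
  have hlast : deriv (f i) (c i + 1 * m i) * m i ≤ ρ * |m i| := by
    rw [show c i + 1 * m i = wi ⬝ᵥ x i from by rw [one_mul]; exact hwiv i]
    refine (le_abs_self _).trans ?_
    rw [abs_mul]
    exact mul_le_mul_of_nonneg_right (hA1 i wi hwiW) (abs_nonneg _)
  have hD1 : D 1 ≤ ρ * |m i| := by linarith
  -- mean value theorem for D
  obtain ⟨ξ, hξ, hMVT⟩ := exists_hasDerivAt_eq_slope D D2 (by norm_num : (0:ℝ) < 1)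
    (fun t _ => (hD t).continuousAt.continuousWithinAt) (fun t ht => hD t)
  have hMVT' : D2 ξ = D 1 - D 0 := by rw [hMVT]; norm_num
  have hQ : α * ∑ j, m j ^ 2 ≤ D2 ξ := by
    rw [Finset.mul_sum, hD2def]
    refine Finset.sum_le_sum fun j _ => ?_
    have hmem : what + ξ • v ∈ W := hpath ξ ⟨hξ.1.le, hξ.2.le⟩
    have h2 := hA2 j _ hmem
    rw [hkey ξ j] at h2
    nlinarith [sq_nonneg (m j)]
  have claim2 : α * ∑ j, m j ^ 2 ≤ ρ * |m i| := by linarith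
  -- mean value theorem for the single loss
  have claim1 : f i (wi ⬝ᵥ x i) - f i (what ⬝ᵥ x i) ≤ ρ * |m i| := by
    obtain ⟨ξ', hξ', hMVT2⟩ := exists_hasDerivAt_eq_slope
      (fun t => f i (c i + t * m i)) (fun t => deriv (f i) (c i + t * m i) * m i)
      (by norm_num : (0:ℝ) < 1)
      (fun t _ => (aux_hasDerivAt_affine (f i) (hdiff i) (c i) (m i) t).continuousAt.continuousWithinAt)
      (fun t _ => aux_hasDerivAt_affine (f i) (hdiff i) (c i) (m i) t)
    have e1 : c i + 1 * m i = wi ⬝ᵥ x i := by rw [one_mul]; exact hwiv i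
    have e0 : c i + 0 * m i = what ⬝ᵥ x i := by rw [zero_mul, add_zero]
    rw [e1, e0] at hMVT2
    have hb : deriv (f i) (c i + ξ' * m i) * m i ≤ ρ * |m i| := by
      have hmem : what + ξ' • v ∈ W := hpath ξ' ⟨hξ'.1.le, hξ'.2.le⟩
      have hA := hA1 i _ hmem
      rw [hkey ξ' i] at hA
      refine (le_abs_self _).trans ?_
      rw [abs_mul]
      exact mul_le_mul_of_nonneg_right hA (abs_nonneg _)
    have : f i (wi ⬝ᵥ x i) - f i (what ⬝ᵥ x i) = deriv (f i) (c i + ξ' * m i) * m i := by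
      rw [hMVT2]; norm_num
    linarith
  exact ⟨claim1, claim2⟩

end PerIndex

lemma euclid_norm_sq {n : ℕ} (u : EuclideanSpace ℝ (Fin n)) :
    ‖u‖ ^ 2 = ∑ i : Fin n, (u i) ^ 2 := by
  rw [EuclideanSpace.norm_eq, Real.sq_sqrt (by positivity)]
  simp [sq_abs]

/-- In the GLM setting, for every sample `S ∈ (X×Y)^n` and any choice of
the ERM `ŵ` and leave-one-out minimizers `ŵ_1, …, ŵ_n` over `W`, the average stability
satisfies the dimension-dependent bound `Δ(S,W) ≤ 2ρ²·d/(α·n)`. -/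
theorem average_stability_le_dimension_bound
    (d n : ℕ) (ρ α : ℝ) (hρ : 0 < ρ) (hα : 0 < α)
    (X W : Set (Fin d → ℝ))
    (hXcomp : IsCompact X) (hXconv : Convex ℝ X)
    (hWcomp : IsCompact W) (hWconv : Convex ℝ W)
    {Y : Type*} (φ : Y → ℝ → ℝ)
    (hφdiff : ∀ y, ∀ z : ℝ, DifferentiableAt ℝ (φ y) z)
    (hφdiff2 : ∀ y, ∀ z : ℝ, DifferentiableAt ℝ (deriv (φ y)) z)
    (hA1 : ∀ y, ∀ w ∈ W, ∀ x ∈ X, |deriv (φ y) (w ⬝ᵥ x)| ≤ ρ)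
    (hA2 : ∀ y, ∀ w ∈ W, ∀ x ∈ X, α ≤ deriv (deriv (φ y)) (w ⬝ᵥ x))
    -- the sample
    (x : Fin n → Fin d → ℝ) (hx : ∀ i, x i ∈ X) (y : Fin n → Y)
    -- the empirical risk minimizer
    (what : Fin d → ℝ) (hwhatW : what ∈ W)
    (hwhat : IsMinOn (fun w => (1 / n : ℝ) * ∑ i : Fin n, φ (y i) (w ⬝ᵥ x i)) W what)
    -- the leave-one-out minimizers
    (whati : Fin n → Fin d → ℝ) (hwhatiW : ∀ i, whati i ∈ W)
    (hwhati : ∀ i, IsMinOn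
      (fun w => ∑ j ∈ Finset.univ.erase i, φ (y j) (w ⬝ᵥ x j)) W (whati i)) :
    (1 / n : ℝ) * ∑ i : Fin n, (φ (y i) (whati i ⬝ᵥ x i) - φ (y i) (what ⬝ᵥ x i))
      ≤ 2 * ρ ^ 2 * d / (α * n) := by
  rcases Nat.eq_zero_or_pos n with hn | hn
  · subst hn
    simp
  have hN : (0:ℝ) < n := by exact_mod_cast hn
  -- remove the 1/n scaling from the ERM condition
  have hwhat' : ∀ w ∈ W, ∑ j, φ (y j) (what ⬝ᵥ x j) ≤ ∑ j, φ (y j) (w ⬝ᵥ x j) := by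
    intro w hw
    have h := isMinOn_iff.mp hwhat w hw
    have hpos : (0:ℝ) < 1 / n := by positivity
    exact le_of_mul_le_mul_left (by simpa [mul_comm] using h) hpos
  -- per-index inequalities
  set t : Fin n → ℝ := fun i => (whati i - what) ⬝ᵥ x i with ht
  have per : ∀ i : Fin n,
      (φ (y i) (whati i ⬝ᵥ x i) - φ (y i) (what ⬝ᵥ x i) ≤ ρ * |t i|) ∧
      (α * ∑ j, ((whati i - what) ⬝ᵥ x j) ^ 2 ≤ ρ * |t i|) := by
    intro i
    exact per_index hρ hα hWconv x (fun j => φ (y j))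
      (fun j => hφdiff (y j)) (fun j => hφdiff2 (y j))
      (fun j w hw => hA1 (y j) w hw (x j) (hx j))
      (fun j w hw => hA2 (y j) w hw (x j) (hx j))
      i hwhatW hwhat' (hwhatiW i) (isMinOn_iff.mp (hwhati i))
  -- the evaluation linear map and its range
  let A : (Fin d → ℝ) →ₗ[ℝ] EuclideanSpace ℝ (Fin n) :=
    { toFun := fun v => (WithLp.toLp 2 (fun j => x j ⬝ᵥ v) : EuclideanSpace ℝ (Fin n))
      map_add' := by intro u v; ext j; simp [dotProduct_add]
      map_smul' := by intro c v; ext j; simp [dotProduct_smul] }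
  set U := LinearMap.range A with hU
  haveI : FiniteDimensional ℝ U := inferInstance
  set P : Fin n → EuclideanSpace ℝ (Fin n) :=
    fun i => (U.orthogonalProjectionOnto (EuclideanSpace.single i 1) :
      EuclideanSpace ℝ (Fin n)) with hP
  -- key pointwise bound
  have key : ∀ i, α * |t i| ≤ ρ * ‖P i‖ ^ 2 := by
    intro i
    set u : EuclideanSpace ℝ (Fin n) := A (whati i - what) with hu
    have huU : u ∈ U := LinearMap.mem_range_self A _
    have hui : u i = t i := by
      have h0 : u i = x i ⬝ᵥ (whati i - what) := rfl
      rw [h0, dotProduct_comm]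
    have hQ : ‖u‖ ^ 2 = ∑ j, ((whati i - what) ⬝ᵥ x j) ^ 2 := by
      rw [euclid_norm_sq]
      exact Finset.sum_congr rfl fun j _ => by rw [show u j = x j ⬝ᵥ (whati i - what) from rfl,
        dotProduct_comm]
    have hCS : |t i| ≤ ‖u‖ * ‖P i‖ := by
      have h1 : (inner ℝ u (EuclideanSpace.single i (1:ℝ)) : ℝ) = t i := by
        rw [EuclideanSpace.inner_single_right]
        simpa using hui
      have h3 : (inner ℝ u (EuclideanSpace.single i (1:ℝ) - P i) : ℝ) = 0 :=
        (Submodule.mem_orthogonal _ _).mp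
          (U.sub_starProjection_mem_orthogonal (EuclideanSpace.single i 1)) u huU
      have h2 : (inner ℝ u (P i) : ℝ) = t i := by
        have := inner_sub_right (𝕜 := ℝ) u (EuclideanSpace.single i (1:ℝ)) (P i)
        rw [h3, h1] at this
        linarith
      calc |t i| = |(inner ℝ u (P i) : ℝ)| := by rw [h2]
        _ ≤ ‖u‖ * ‖P i‖ := abs_real_inner_le_norm u (P i)
    have hc2 : α * ‖u‖ ^ 2 ≤ ρ * |t i| := by rw [hQ]; exact (per i).2
    rcases eq_or_lt_of_le (abs_nonneg (t i)) with h | h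
    · rw [← h, mul_zero]
      positivity
    · have hsq : |t i| ^ 2 ≤ (‖u‖ * ‖P i‖) ^ 2 := pow_le_pow_left₀ (abs_nonneg _) hCS 2
      have hsq' : |t i| ^ 2 ≤ ‖u‖ ^ 2 * ‖P i‖ ^ 2 := by rw [mul_pow] at hsq; exact hsq
      refine le_of_mul_le_mul_right ?_ h
      nlinarith [mul_le_mul_of_nonneg_left hsq' hα.le,
        mul_le_mul_of_nonneg_right hc2 (sq_nonneg (‖P i‖))]
  -- summing up
  have hS1 : ∑ i, (φ (y i) (whati i ⬝ᵥ x i) - φ (y i) (what ⬝ᵥ x i)) ≤ ρ * ∑ i, |t i| := by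
    rw [Finset.mul_sum]
    exact Finset.sum_le_sum fun i _ => (per i).1
  have hrank : (Module.finrank ℝ U : ℝ) ≤ (d : ℝ) := by
    have h1 : Module.finrank ℝ U ≤ Module.finrank ℝ (Fin d → ℝ) := A.finrank_range_le
    rw [Module.finrank_fin_fun ℝ] at h1
    exact_mod_cast h1
  have hS2 : α * ∑ i, |t i| ≤ ρ * (d : ℝ) := by
    calc α * ∑ i, |t i| = ∑ i, α * |t i| := Finset.mul_sum _ _ _
      _ ≤ ∑ i, ρ * ‖P i‖ ^ 2 := Finset.sum_le_sum fun i _ => key i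
      _ = ρ * ∑ i, ‖P i‖ ^ 2 := (Finset.mul_sum _ _ _).symm
      _ = ρ * (Module.finrank ℝ U : ℝ) := by rw [proj_trace U]
      _ ≤ ρ * (d : ℝ) := mul_le_mul_of_nonneg_left hrank hρ.le
  -- final arithmetic
  have hsum_t : ∑ i, |t i| ≤ ρ * d / α := by
    rw [le_div_iff₀ hα]
    linarith [hS2]
  have hfin : ∑ i, (φ (y i) (whati i ⬝ᵥ x i) - φ (y i) (what ⬝ᵥ x i)) ≤ ρ ^ 2 * d / α := by
    calc ∑ i, (φ (y i) (whati i ⬝ᵥ x i) - φ (y i) (what ⬝ᵥ x i))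
        ≤ ρ * ∑ i, |t i| := hS1
      _ ≤ ρ * (ρ * d / α) := mul_le_mul_of_nonneg_left hsum_t hρ.le
      _ = ρ ^ 2 * d / α := by ring
  have hn' : (0:ℝ) ≤ 1 / n := by positivity
  have step1 : (1 / n : ℝ) * ∑ i : Fin n, (φ (y i) (whati i ⬝ᵥ x i) - φ (y i) (what ⬝ᵥ x i))
      ≤ (1 / n : ℝ) * (ρ ^ 2 * d / α) := mul_le_mul_of_nonneg_left hfin hn'
  have eq1 : (1 / (n:ℝ)) * (ρ ^ 2 * d / α) = ρ ^ 2 * d / (α * n) := by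
    rw [one_div, inv_mul_eq_div, div_div]
    try rfl
  have e2 : 2 * ρ ^ 2 * (d:ℝ) / (α * n) = 2 * (ρ ^ 2 * d / (α * n)) := by ring
  have hnn : (0:ℝ) ≤ ρ ^ 2 * d / (α * n) := by positivity
  rw [eq1] at step1
  rw [e2]
  linarith
end

section
/- Linear regression stability bound without preconditioning: let X ⊆ ℝ^d be compact and convex, W = {w ∈ ℝ^d : |wᵀx| ≤ Y₀ for all x ∈ X}, and φ_y(z) = (1/2)·(z − y)² for y ∈ [−Y₀, Y₀]. For every sample S ∈ (X×[−Y₀,Y₀])^n whose empirical covariance Ĉ = (1/n)·Σ x_i x_iᵀ is invertible, and any choice of minimizers ŵ and ŵ_1,…,ŵ_n, the average stability satisfies Δ(S,W) ≤ (4·Y₀²/n)·κ(Ĉ), where κ(Ĉ) = tr(Ĉ)/λ_min(Ĉ). -/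
open Matrix

lemma aux_theta (B Q : ℝ) (h : ∀ θ : ℝ, 0 ≤ θ → θ ≤ 1 → 0 ≤ θ * B + θ^2 * Q) : 0 ≤ B := by
  by_contra hB
  push_neg at hB
  rcases le_or_gt Q 0 with hQ | hQ
  · have := h 1 zero_le_one le_rfl
    nlinarith
  · have hθ0 : 0 < min 1 (-B/(2*Q)) := lt_min one_pos (div_pos (by linarith) (by linarith))
    have hθ1 : min 1 (-B/(2*Q)) ≤ 1 := min_le_left _ _
    have h2 : min 1 (-B/(2*Q)) * Q ≤ -B/2 := by
      calc min 1 (-B/(2*Q)) * Q ≤ (-B/(2*Q)) * Q :=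
            mul_le_mul_of_nonneg_right (min_le_right _ _) hQ.le
        _ = -B/2 := by field_simp
  
    have := h _ hθ0.le hθ1
    nlinarith

lemma sum_rotate {α β γ : Type*} [Fintype α] [Fintype β] [Fintype γ] (F : α → β → γ → ℝ) :
    ∑ a, ∑ b, ∑ c, F a b c = ∑ c, ∑ b, ∑ a, F a b c :=
  calc ∑ a, ∑ b, ∑ c, F a b c = ∑ b, ∑ a, ∑ c, F a b c := Finset.sum_comm
  _ = ∑ b, ∑ c, ∑ a, F a b c := Finset.sum_congr rfl (fun _ _ => Finset.sum_comm)
  _ = ∑ c, ∑ b, ∑ a, F a b c := Finset.sum_comm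

lemma spectrum_eq_range_eigenvalues {d : ℕ} (C : Matrix (Fin d) (Fin d) ℝ) (hH : C.IsHermitian) :
    spectrum ℝ C = Set.range hH.eigenvalues := by
  apply Set.Subset.antisymm
  · intro μ hμ
    by_contra hr
    rw [spectrum.mem_iff] at hμ
    apply hμ
    rw [Algebra.algebraMap_eq_smul_one]
    set U : Matrix (Fin d) (Fin d) ℝ := (hH.eigenvectorUnitary : Matrix (Fin d) (Fin d) ℝ) with hUdef
    have hU : U * star U = 1 := (Matrix.mem_unitaryGroup_iff).mp hH.eigenvectorUnitary.2
    have hdiag : diagonal (fun i => μ - hH.eigenvalues i)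
        = μ • (1 : Matrix (Fin d) (Fin d) ℝ) - diagonal (RCLike.ofReal ∘ hH.eigenvalues) := by
      ext i j
      by_cases h : i = j <;> simp [Matrix.diagonal_apply, h, Matrix.one_apply]
    have hdec : μ • (1 : Matrix (Fin d) (Fin d) ℝ) - C
        = U * diagonal (fun i => μ - hH.eigenvalues i) * star U := by
      rw [hdiag, Matrix.mul_sub, Matrix.sub_mul, Matrix.mul_smul, Matrix.mul_one,
        Matrix.smul_mul, hU]
      conv_lhs => rw [hH.spectral_theorem, Unitary.conjStarAlgAut_apply]
    rw [hdec, Matrix.isUnit_iff_isUnit_det, Matrix.det_mul, Matrix.det_mul,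
      mul_comm (U.det), mul_assoc, ← Matrix.det_mul, hU, Matrix.det_one, mul_one,
      Matrix.det_diagonal, isUnit_iff_ne_zero]
    apply Finset.prod_ne_zero_iff.mpr
    intro i _ h0
    exact hr ⟨i, by linarith [sub_eq_zero.mp h0]⟩
  · rintro _ ⟨i, rfl⟩
    exact hH.eigenvalues_mem_spectrum_real i

lemma rayleigh_lower {d : ℕ} (C : Matrix (Fin d) (Fin d) ℝ) (hH : C.IsHermitian) (lam : ℝ)
    (hlam : ∀ i, lam ≤ hH.eigenvalues i) (u : Fin d → ℝ) :
    lam * (u ⬝ᵥ u) ≤ u ⬝ᵥ (C *ᵥ u) := by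
  set U : Matrix (Fin d) (Fin d) ℝ := (hH.eigenvectorUnitary : Matrix (Fin d) (Fin d) ℝ) with hUdef
  have hU : U * star U = 1 := (Matrix.mem_unitaryGroup_iff).mp hH.eigenvectorUnitary.2
  have hsU : star U = Uᵀ := by
    rw [Matrix.star_eq_conjTranspose]
    ext i j
    simp [Matrix.conjTranspose_apply]
  set w : Fin d → ℝ := star U *ᵥ u with hwdef
  have hvm : vecMul u U = w := by rw [hwdef, hsU, Matrix.mulVec_transpose]
  have h1 : u ⬝ᵥ (C *ᵥ u) = ∑ i, hH.eigenvalues i * (w i)^2 := by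
    conv_lhs => rw [hH.spectral_theorem, Unitary.conjStarAlgAut_apply]
    rw [← Matrix.mulVec_mulVec, ← Matrix.mulVec_mulVec, Matrix.dotProduct_mulVec, hvm]
    simp [dotProduct, Matrix.mulVec_diagonal]
    congr 1; funext i; ring
  have h2 : u ⬝ᵥ u = ∑ i, (w i)^2 := by
    have hww : w ⬝ᵥ (star U *ᵥ u) = u ⬝ᵥ u := by
      rw [Matrix.dotProduct_mulVec, ← Matrix.mulVec_transpose, hsU, Matrix.transpose_transpose,
        hwdef, Matrix.mulVec_mulVec, hU, Matrix.one_mulVec, dotProduct_comm]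
    rw [← hww]
    simp [dotProduct, sq]; rfl
  rw [h1, h2, Finset.mul_sum]
  exact Finset.sum_le_sum fun i _ => mul_le_mul_of_nonneg_right (hlam i) (sq_nonneg _)

set_option maxHeartbeats 2000000 in
/-- Linear regression stability bound without preconditioning. Let
`X ⊆ ℝ^d` be compact convex, `W = {w : |wᵀx| ≤ Y₀ for all x ∈ X}`, and
`φ_y(z) = (1/2)(z − y)²`. For every sample `S ∈ (X×[−Y₀,Y₀])^n` whose empirical covariance
`Ĉ = (1/n)·∑ x_i x_iᵀ` is invertible, and any choice of the ERM `ŵ` and leave-one-out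
minimizers `ŵ_1, …, ŵ_n` over `W`, the average stability satisfies
`Δ(S,W) ≤ (4Y₀²/n)·κ(Ĉ)`, where `κ(Ĉ) = tr(Ĉ)/λ_min(Ĉ)` and
`λ_min(Ĉ) = sInf (spectrum ℝ Ĉ)` is the smallest eigenvalue. -/
theorem linear_regression_stability_condition_number_bound
    (d n : ℕ) (Y₀ : ℝ) (hY₀ : 0 < Y₀)
    (X : Set (Fin d → ℝ)) (hXcomp : IsCompact X) (hXconv : Convex ℝ X)
    (W : Set (Fin d → ℝ)) (hW : W = {w : Fin d → ℝ | ∀ x ∈ X, |w ⬝ᵥ x| ≤ Y₀})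
    -- the sample
    (x : Fin n → Fin d → ℝ) (hx : ∀ i, x i ∈ X)
    (y : Fin n → ℝ) (hy : ∀ i, y i ∈ Set.Icc (-Y₀) Y₀)
    -- the empirical covariance matrix, assumed invertible
    (C : Matrix (Fin d) (Fin d) ℝ)
    (hC : C = (1 / n : ℝ) • ∑ i : Fin n, vecMulVec (x i) (x i))
    (hCinv : IsUnit C)
    -- the empirical risk minimizer
    (what : Fin d → ℝ) (hwhatW : what ∈ W)
    (hwhat : IsMinOn (fun w => (1 / n : ℝ) * ∑ i : Fin n, (w ⬝ᵥ x i - y i) ^ 2 / 2) W what)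
    -- the leave-one-out minimizers
    (whati : Fin n → Fin d → ℝ) (hwhatiW : ∀ i, whati i ∈ W)
    (hwhati : ∀ i, IsMinOn
      (fun w => ∑ j ∈ Finset.univ.erase i, (w ⬝ᵥ x j - y j) ^ 2 / 2) W (whati i)) :
    (1 / n : ℝ) * ∑ i : Fin n,
        ((whati i ⬝ᵥ x i - y i) ^ 2 / 2 - (what ⬝ᵥ x i - y i) ^ 2 / 2)
      ≤ (4 * Y₀ ^ 2 / n) * (C.trace / sInf (spectrum ℝ C)) := by
  rcases Nat.eq_zero_or_pos n with hn | hn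
  · subst hn
    simp
  rcases Nat.eq_zero_or_pos d with hd | hd
  · subst hd
    have htr : C.trace = 0 := by simp [Matrix.trace]
    have hdot : ∀ (w v : Fin 0 → ℝ), w ⬝ᵥ v = 0 := fun w v => by simp [dotProduct]
    simp [hdot, htr]
  -- main case
  have hnR : (0:ℝ) < (n:ℝ) := by exact_mod_cast hn
  haveI : Nonempty (Fin d) := ⟨⟨0, hd⟩⟩
  have hH : C.IsHermitian := by
    rw [hC]
    ext i j
    simp [Matrix.conjTranspose_apply, Matrix.smul_apply, Matrix.sum_apply,
      Matrix.vecMulVec_apply, mul_comm]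
  set lam := sInf (spectrum ℝ C) with hlamdef
  have hspec : spectrum ℝ C = Set.range hH.eigenvalues := spectrum_eq_range_eigenvalues C hH
  have hfin : (spectrum ℝ C).Finite := by rw [hspec]; exact Set.finite_range _
  have hne : (spectrum ℝ C).Nonempty := by rw [hspec]; exact Set.range_nonempty _
  have hmem : lam ∈ spectrum ℝ C := hne.csInf_mem hfin
  have hlam_le : ∀ i, lam ≤ hH.eigenvalues i := fun i =>
    csInf_le hfin.bddBelow (by rw [hspec]; exact ⟨i, rfl⟩)
  have hquad : ∀ u : Fin d → ℝ, u ⬝ᵥ (C *ᵥ u) = (1/n : ℝ) * ∑ j, (u ⬝ᵥ x j)^2 := by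
    intro u
    rw [hC]
    simp only [dotProduct, Matrix.mulVec, Matrix.smul_apply, Matrix.sum_apply,
      Matrix.vecMulVec_apply, smul_eq_mul, Finset.mul_sum, Finset.sum_mul, sq]
    rw [sum_rotate]
    apply Finset.sum_congr rfl; intro j _
    apply Finset.sum_congr rfl; intro k _
    apply Finset.sum_congr rfl; intro l _
    ring
  -- positivity of lam
  have hlam_pos : 0 < lam := by
    have hmem' := hmem
    rw [hspec] at hmem'
    obtain ⟨i0, hi0⟩ := hmem'
    have hv := hH.mulVec_eigenvectorBasis i0
    set v : Fin d → ℝ := ⇑(hH.eigenvectorBasis i0) with hvdef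
    have hvne : v ≠ 0 := by
      have := hH.eigenvectorBasis.orthonormal.ne_zero i0
      intro h0
      apply this
      ext k
      exact congrFun h0 k
    have hvv : 0 < v ⬝ᵥ v := by
      have hnn : 0 ≤ v ⬝ᵥ v := Finset.sum_nonneg fun k _ => mul_self_nonneg _
      have hne0 : v ⬝ᵥ v ≠ 0 := fun h0 => hvne (dotProduct_self_eq_zero.mp h0)
      exact lt_of_le_of_ne hnn (Ne.symm hne0)
    have hq : 0 ≤ v ⬝ᵥ (C *ᵥ v) := by
      rw [hquad v]
      positivity
    have hCv : v ⬝ᵥ (C *ᵥ v) = lam * (v ⬝ᵥ v) := by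
      rw [hv, hi0]
      simp [dotProduct_smul]
    have hlam0 : 0 ≤ lam := by
      by_contra hneg
      push_neg at hneg
      nlinarith
    rcases hlam0.lt_or_eq with h | h
    · exact h
    · exfalso
      have h0 : (0:ℝ) ∈ spectrum ℝ C := by rw [h]; exact hmem
      exact (spectrum.zero_mem_iff ℝ).mp h0 hCinv
  have hnl : 0 < (n:ℝ) * lam := mul_pos hnR hlam_pos
  -- convexity of W
  have hWconv : Convex ℝ W := by
    rw [hW]
    intro w1 h1 w2 h2 a b ha hb hab
    intro xx hxx
    have e : (a • w1 + b • w2) ⬝ᵥ xx = a * (w1 ⬝ᵥ xx) + b * (w2 ⬝ᵥ xx) := by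
      simp [add_dotProduct, smul_dotProduct]
    have h1' := h1 xx hxx
    have h2' := h2 xx hxx
    rw [e]
    calc |a * (w1 ⬝ᵥ xx) + b * (w2 ⬝ᵥ xx)| ≤ |a * (w1 ⬝ᵥ xx)| + |b * (w2 ⬝ᵥ xx)| := abs_add_le _ _
      _ = a * |w1 ⬝ᵥ xx| + b * |w2 ⬝ᵥ xx| := by
          rw [abs_mul, abs_mul, abs_of_nonneg ha, abs_of_nonneg hb]
      _ ≤ a * Y₀ + b * Y₀ := by
          gcongr
      _ = Y₀ := by rw [← add_mul, hab, one_mul]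
  have hseg : ∀ (p q : Fin d → ℝ), p ∈ W → q ∈ W → ∀ θ:ℝ, 0 ≤ θ → θ ≤ 1 →
      p + θ • (q - p) ∈ W := by
    intro p q hp hq θ h0 h1
    have e : p + θ • (q - p) = (1-θ) • p + θ • q := by
      ext k; simp; ring
    rw [e]
    exact hWconv hp hq (by linarith) h0 (by ring)
  -- main per-index bound
  have main : ∀ i : Fin n, (whati i ⬝ᵥ x i - y i)^2/2 - (what ⬝ᵥ x i - y i)^2/2
      ≤ 4*Y₀^2 * (x i ⬝ᵥ x i) / ((n:ℝ) * lam) := by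
    intro i
    set u : Fin d → ℝ := whati i - what with hu
    set t : Fin n → ℝ := fun j => u ⬝ᵥ x j with ht
    set bb : Fin n → ℝ := fun j => what ⬝ᵥ x j - y j with hbb
    have hab : ∀ j, whati i ⬝ᵥ x j - y j = bb j + t j := by
      intro j
      simp only [hbb, ht, hu, sub_dotProduct]
      ring
    -- first-order optimality of what
    have hB : 0 ≤ ∑ j, bb j * t j := by
      apply aux_theta _ (∑ j, (t j)^2 / 2)
      intro θ h0 h1
      have hmemθ : what + θ • u ∈ W := by
        rw [hu]
        exact hseg what (whati i) hwhatW (hwhatiW i) θ h0 h1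
      have hdot : ∀ j, (what + θ • u) ⬝ᵥ x j - y j = bb j + θ * t j := by
        intro j
        simp only [hbb, ht, add_dotProduct, smul_dotProduct, smul_eq_mul]
        ring
      have hexp : ∑ j, ((what + θ • u) ⬝ᵥ x j - y j)^2/2
          = ∑ j, (bb j)^2/2 + (θ * (∑ j, bb j * t j) + θ^2 * (∑ j, (t j)^2/2)) := by
        rw [Finset.mul_sum, Finset.mul_sum, ← Finset.sum_add_distrib, ← Finset.sum_add_distrib]
        apply Finset.sum_congr rfl
        intro j _
        rw [hdot j]
        ring
      have hmin := isMinOn_iff.mp hwhat _ hmemθ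
      rw [hexp] at hmin
      have e0 : ∑ j, (what ⬝ᵥ x j - y j)^2/2 = ∑ j, (bb j)^2/2 := rfl
      rw [e0] at hmin
      have := (mul_le_mul_iff_of_pos_left (by positivity : (0:ℝ) < 1/n)).mp hmin
      linarith
    -- first-order optimality of whati i
    have hA : (∑ j ∈ Finset.univ.erase i, (bb j + t j) * t j) ≤ 0 := by
      have hkey : 0 ≤ -(∑ j ∈ Finset.univ.erase i, (bb j + t j) * t j) := by
        apply aux_theta _ (∑ j ∈ Finset.univ.erase i, (t j)^2 / 2)
        intro θ h0 h1
        have hmemθ : whati i + θ • (-u) ∈ W := by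
          have e : -u = what - whati i := by rw [hu]; ring
          rw [e]
          exact hseg (whati i) what (hwhatiW i) hwhatW θ h0 h1
        have hdot : ∀ j, (whati i + θ • (-u)) ⬝ᵥ x j - y j = (bb j + t j) - θ * t j := by
          intro j
          have := hab j
          simp only [ht, add_dotProduct, smul_dotProduct, neg_dotProduct,
            smul_eq_mul] at this ⊢
          rw [← this]
          ring
        have hexp : ∑ j ∈ Finset.univ.erase i, ((whati i + θ • (-u)) ⬝ᵥ x j - y j)^2/2
            = ∑ j ∈ Finset.univ.erase i, (whati i ⬝ᵥ x j - y j)^2/2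
              + (θ * (-(∑ j ∈ Finset.univ.erase i, (bb j + t j) * t j))
                + θ^2 * (∑ j ∈ Finset.univ.erase i, (t j)^2/2)) := by
          rw [← Finset.sum_neg_distrib, Finset.mul_sum, Finset.mul_sum,
            ← Finset.sum_add_distrib, ← Finset.sum_add_distrib]
          apply Finset.sum_congr rfl
          intro j _
          rw [hdot j, hab j]
          ring
        have hmin := isMinOn_iff.mp (hwhati i) _ hmemθ
        rw [hexp] at hmin
        linarith
      linarith
    -- combine
    have hsum_split : ∑ j, (bb j + t j) * t j
        = (∑ j ∈ Finset.univ.erase i, (bb j + t j) * t j) + (bb i + t i) * t i := by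
      rw [add_comm]
      exact (Finset.add_sum_erase _ _ (Finset.mem_univ i)).symm
    have hQsplit : ∑ j, (bb j + t j) * t j = (∑ j, bb j * t j) + ∑ j, (t j)^2 := by
      rw [← Finset.sum_add_distrib]
      apply Finset.sum_congr rfl
      intro j _
      ring
    have hkey1 : (∑ j, (t j)^2) ≤ (bb i + t i) * t i := by linarith
    have hray : (n:ℝ) * lam * (u ⬝ᵥ u) ≤ ∑ j, (t j)^2 := by
      have h1 := rayleigh_lower C hH lam hlam_le u
      rw [hquad u] at h1
      have h3 : (n:ℝ) * ((1/n : ℝ) * ∑ j, (u ⬝ᵥ x j)^2) = ∑ j, (u ⬝ᵥ x j)^2 := by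
        field_simp
      have h4 := mul_le_mul_of_nonneg_left h1 hnR.le
      rw [h3] at h4
      have e : ∑ j, (t j)^2 = ∑ j, (u ⬝ᵥ x j)^2 := rfl
      rw [e]
      linarith
    -- bounds on a_i and Cauchy-Schwarz
    have hxiW : |whati i ⬝ᵥ x i| ≤ Y₀ := by
      have h := hwhatiW i
      rw [hW] at h
      exact h (x i) (hx i)
    have hyi := hy i
    have habs : (bb i + t i)^2 ≤ (2*Y₀)^2 := by
      rw [← hab i]
      have h5 := abs_le.mp hxiW
      obtain ⟨hy1, hy2⟩ := hyi
      nlinarith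
    have hCS : (t i)^2 ≤ (u ⬝ᵥ u) * (x i ⬝ᵥ x i) := by
      have h6 := Finset.sum_mul_sq_le_sq_mul_sq Finset.univ u (x i)
      have e1 : t i = ∑ k, u k * x i k := rfl
      have e2 : u ⬝ᵥ u = ∑ k, u k ^ 2 := by simp [dotProduct, sq]
      have e3 : x i ⬝ᵥ x i = ∑ k, x i k ^ 2 := by simp [dotProduct, sq]
      rw [e1, e2, e3]
      exact h6
    have huu : 0 ≤ u ⬝ᵥ u := Finset.sum_nonneg fun k _ => mul_self_nonneg _
    have hxx : 0 ≤ x i ⬝ᵥ x i := Finset.sum_nonneg fun k _ => mul_self_nonneg _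
    -- finish
    have hRHS0 : 0 ≤ 4*Y₀^2 * (x i ⬝ᵥ x i) / ((n:ℝ) * lam) := by positivity
    rw [hab i]
    have hbbi : what ⬝ᵥ x i - y i = bb i := rfl
    rw [hbbi]
    have hdelta : (bb i + t i)^2/2 - (bb i)^2/2 ≤ (bb i + t i) * t i := by
      nlinarith [sq_nonneg (t i)]
    rcases le_or_gt ((bb i + t i) * t i) 0 with hP | hP
    · exact (hdelta.trans hP).trans hRHS0
    · have f1 : ((bb i + t i) * t i)^2 ≤ (2*Y₀)^2 * ((u ⬝ᵥ u) * (x i ⬝ᵥ x i)) := by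
        have e : ((bb i + t i) * t i)^2 = (bb i + t i)^2 * (t i)^2 := by ring
        rw [e]
        exact mul_le_mul habs hCS (sq_nonneg _) (by positivity)
      have f2 : ((n:ℝ) * lam) * (u ⬝ᵥ u) ≤ (bb i + t i) * t i := le_trans hray hkey1
      have g1 : ((bb i + t i) * t i)^2 * ((n:ℝ) * lam)
          ≤ (4*Y₀^2 * (x i ⬝ᵥ x i)) * ((bb i + t i) * t i) := by
        calc ((bb i + t i) * t i)^2 * ((n:ℝ) * lam)
            ≤ ((2*Y₀)^2 * ((u ⬝ᵥ u) * (x i ⬝ᵥ x i))) * ((n:ℝ) * lam) :=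
              mul_le_mul_of_nonneg_right f1 hnl.le
          _ = (4*Y₀^2 * (x i ⬝ᵥ x i)) * (((n:ℝ) * lam) * (u ⬝ᵥ u)) := by ring
          _ ≤ (4*Y₀^2 * (x i ⬝ᵥ x i)) * ((bb i + t i) * t i) :=
              mul_le_mul_of_nonneg_left f2 (by positivity)
      have hPle : ((bb i + t i) * t i) * ((n:ℝ) * lam) ≤ 4*Y₀^2 * (x i ⬝ᵥ x i) := by
        nlinarith [g1, hP, hnl]
      have hPdiv : (bb i + t i) * t i ≤ 4*Y₀^2 * (x i ⬝ᵥ x i) / ((n:ℝ) * lam) := by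
        rw [le_div_iff₀ hnl]
        exact hPle
      linarith
  -- sum up
  have htrace : C.trace = (1/n : ℝ) * ∑ j, (x j ⬝ᵥ x j) := by
    rw [hC, Matrix.trace_smul, Matrix.trace_sum]
    simp [Matrix.trace, Matrix.diag, Matrix.vecMulVec_apply, dotProduct, smul_eq_mul]
  have step1 : (1 / n : ℝ) * ∑ i : Fin n,
        ((whati i ⬝ᵥ x i - y i) ^ 2 / 2 - (what ⬝ᵥ x i - y i) ^ 2 / 2)
      ≤ (1/n : ℝ) * ∑ i : Fin n, 4*Y₀^2 * (x i ⬝ᵥ x i) / ((n:ℝ) * lam) := by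
    apply mul_le_mul_of_nonneg_left _ (by positivity : (0:ℝ) ≤ 1/n)
    exact Finset.sum_le_sum fun i _ => main i
  have step2 : (1/n : ℝ) * ∑ i : Fin n, 4*Y₀^2 * (x i ⬝ᵥ x i) / ((n:ℝ) * lam)
      = (4 * Y₀ ^ 2 / n) * (C.trace / lam) := by
    rw [htrace]
    have e : ∑ i : Fin n, 4*Y₀^2 * (x i ⬝ᵥ x i) / ((n:ℝ) * lam)
        = (4*Y₀^2 / ((n:ℝ) * lam)) * ∑ i : Fin n, (x i ⬝ᵥ x i) := by
      rw [Finset.mul_sum]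
      apply Finset.sum_congr rfl
      intro j _
      ring
    rw [e]
    field_simp
  linarith
end
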